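/- arXiv:1601.07808 — 7 statements merged into one kernel-verified Lean document; each statement's English description precedes it below -/
import Mathlib

section
/- Let n ≥ 1 and let Φ : Matrix (Fin n) ℂ →ₗ[ℂ] Matrix (Fin n) ℂ be a positive trace-preserving linear map. Then Φ is unital (Φ 1 = 1) if and only if for every density matrix ρ there exists a doubly stochastic n × n real matrix B such that the vector of eigenvalues of Φ ρ, arranged in decreasing order, equals B applied to the vector of eigenvalues of ρ arranged in decreasing order. -/
open scoped Matrix ComplexOrder

/-- A density matrix: positive semidefinite with unit trace. -/
def IsDensityMatrix {n : ℕ} (ρ : Matrix (Fin n) (Fin n) ℂ) : Prop :=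
  ρ.PosSemidef ∧ ρ.trace = 1

/-- The (real) eigenvalues of a matrix, via its Hermitian spectral decomposition
(junk value `0` if the matrix is not Hermitian). -/
noncomputable def eigs {n : ℕ} (A : Matrix (Fin n) (Fin n) ℂ) : Fin n → ℝ :=
  if h : A.IsHermitian then h.eigenvalues else 0

/-- A linear map on matrices is positive if it preserves positive semidefiniteness. -/
def IsPositiveMap {n : ℕ}
    (Φ : Matrix (Fin n) (Fin n) ℂ →ₗ[ℂ] Matrix (Fin n) (Fin n) ℂ) : Prop :=
  ∀ A : Matrix (Fin n) (Fin n) ℂ, A.PosSemidef → (Φ A).PosSemidef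

/-- A linear map on matrices is trace-preserving if it preserves the trace. -/
def IsTracePreserving {n : ℕ}
    (Φ : Matrix (Fin n) (Fin n) ℂ →ₗ[ℂ] Matrix (Fin n) (Fin n) ℂ) : Prop :=
  ∀ A : Matrix (Fin n) (Fin n) ℂ, (Φ A).trace = A.trace


/-- The vector `v` rearranged in decreasing order. -/
noncomputable def sortDesc {n : ℕ} (v : Fin n → ℝ) : Fin n → ℝ :=
  fun i => v (Tuple.sort v i.rev)

/-- A real square matrix is doubly stochastic if its entries are nonnegative and
every row and every column sums to `1`. -/
def IsDoublyStochastic {n : ℕ} (B : Matrix (Fin n) (Fin n) ℝ) : Prop :=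
  (∀ i j, 0 ≤ B i j) ∧ (∀ i, ∑ j, B i j = 1) ∧ (∀ j, ∑ i, B i j = 1)


section BistoAuxSec
open Matrix Finset

namespace BistoAux

variable {n : ℕ}

def col' (U : Matrix (Fin n) (Fin n) ℂ) (k : Fin n) : Fin n → ℂ := fun i => U i k

noncomputable def proj (v : Fin n → ℂ) : Matrix (Fin n) (Fin n) ℂ :=
  Matrix.vecMulVec v (star v)

lemma proj_posSemidef (v : Fin n → ℂ) : (proj v).PosSemidef := by
  refine Matrix.PosSemidef.of_dotProduct_mulVec_nonneg ?_ ?_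
  · ext i j
    simp [proj, vecMulVec_apply, conjTranspose_apply, mul_comm]
  · intro x
    have key : star x ⬝ᵥ (proj v *ᵥ x)
        = (∑ i, (starRingEnd ℂ) (x i) * v i) *
          (starRingEnd ℂ) (∑ i, (starRingEnd ℂ) (x i) * v i) := by
      calc star x ⬝ᵥ (proj v *ᵥ x)
          = ∑ i, ∑ j, (starRingEnd ℂ) (x i) * (v i * ((starRingEnd ℂ) (v j) * x j)) := by
            simp only [dotProduct, mulVec, proj, vecMulVec_apply, Pi.star_apply,
              Complex.star_def, Finset.mul_sum]
            exact Finset.sum_congr rfl fun i _ => Finset.sum_congr rfl fun j _ => by ring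
        _ = (∑ i, (starRingEnd ℂ) (x i) * v i) * (∑ j, (starRingEnd ℂ) (v j) * x j) := by
            rw [Finset.sum_mul_sum]
            exact Finset.sum_congr rfl fun i _ => Finset.sum_congr rfl fun j _ => by ring
        _ = _ := by
            congr 1
            rw [map_sum]
            exact Finset.sum_congr rfl fun j _ => by
              simp [mul_comm]
    rw [key, Complex.mul_conj]
    exact Complex.zero_le_real.mpr (Complex.normSq_nonneg _)

lemma quad_sum {ι : Type*} (s : Finset ι) (M : ι → Matrix (Fin n) (Fin n) ℂ) (v : Fin n → ℂ) :
    star v ⬝ᵥ ((∑ k ∈ s, M k) *ᵥ v) = ∑ k ∈ s, star v ⬝ᵥ (M k *ᵥ v) := by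
  classical
  induction s using Finset.induction with
  | empty => simp [Matrix.zero_mulVec]
  | insert _ _ h ih =>
      rw [Finset.sum_insert h, Finset.sum_insert h, Matrix.add_mulVec, dotProduct_add, ih]

lemma quad_smul (c : ℂ) (M : Matrix (Fin n) (Fin n) ℂ) (v : Fin n → ℂ) :
    star v ⬝ᵥ ((c • M) *ᵥ v) = c * (star v ⬝ᵥ (M *ᵥ v)) := by
  rw [smul_mulVec, dotProduct_smul, smul_eq_mul]

lemma sum_quad_trace (M V : Matrix (Fin n) (Fin n) ℂ) (hV : V * star V = 1) :
    ∑ j, star (col' V j) ⬝ᵥ (M *ᵥ col' V j) = M.trace := by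
  have hV' : ∀ l i, ∑ j, V l j * (starRingEnd ℂ) (V i j) = (1 : Matrix (Fin n) (Fin n) ℂ) l i := by
    intro l i
    have := congrFun (congrFun hV l) i
    simpa [Matrix.mul_apply, conjTranspose_apply, Matrix.star_apply, Complex.star_def] using this
  calc ∑ j, star (col' V j) ⬝ᵥ (M *ᵥ col' V j)
      = ∑ j, ∑ i, ∑ l, (starRingEnd ℂ) (V i j) * (M i l * V l j) := by
        simp [dotProduct, mulVec, col', Finset.mul_sum]
    _ = ∑ i, ∑ l, ∑ j, (starRingEnd ℂ) (V i j) * (M i l * V l j) := by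
        rw [Finset.sum_comm]
        exact Finset.sum_congr rfl fun i _ => Finset.sum_comm
    _ = ∑ i, ∑ l, M i l * ∑ j, V l j * (starRingEnd ℂ) (V i j) := by
        refine Finset.sum_congr rfl fun i _ => Finset.sum_congr rfl fun l _ => ?_
        rw [Finset.mul_sum]
        exact Finset.sum_congr rfl fun j _ => by ring
    _ = ∑ i, M i i := by
        refine Finset.sum_congr rfl fun i _ => ?_
        simp [hV', Matrix.one_apply, mul_ite]
    _ = M.trace := rfl

lemma quad_eigen (A : Matrix (Fin n) (Fin n) ℂ) (hA : A.IsHermitian) (j : Fin n) :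
    star (col' hA.eigenvectorUnitary j) ⬝ᵥ (A *ᵥ col' hA.eigenvectorUnitary j)
      = (hA.eigenvalues j : ℂ) := by
  have hd0 : star (hA.eigenvectorUnitary : Matrix (Fin n) (Fin n) ℂ) * A *
      (hA.eigenvectorUnitary : Matrix (Fin n) (Fin n) ℂ) = diagonal (RCLike.ofReal ∘ hA.eigenvalues) := by
    have h0 := hA.conjStarAlgAut_star_eigenvectorUnitary
    rwa [Unitary.conjStarAlgAut_apply, Unitary.coe_star, star_star] at h0
  have h := congrFun (congrFun hd0 j) j
  have heq : (star (hA.eigenvectorUnitary : Matrix (Fin n) (Fin n) ℂ) * A *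
      (hA.eigenvectorUnitary : Matrix (Fin n) (Fin n) ℂ)) j j
      = star (col' hA.eigenvectorUnitary j) ⬝ᵥ (A *ᵥ col' hA.eigenvectorUnitary j) := by
    simp only [Matrix.mul_apply, dotProduct, mulVec, col', Pi.star_apply, conjTranspose_apply,
      Matrix.star_apply, Complex.star_def, Finset.sum_mul, Finset.mul_sum]
    rw [Finset.sum_comm]
    exact Finset.sum_congr rfl fun i _ => Finset.sum_congr rfl fun l _ => by ring
  rw [heq] at h
  simpa [Matrix.diagonal_apply_eq] using h

lemma sum_proj (U : Matrix (Fin n) (Fin n) ℂ) (hU : U * star U = 1) :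
    ∑ k, proj (col' U k) = 1 := by
  ext i j
  have := congrFun (congrFun hU i) j
  simp only [Matrix.mul_apply, conjTranspose_apply, Matrix.star_apply, Complex.star_def] at this
  simpa [proj, vecMulVec_apply, col', Matrix.sum_apply, Pi.star_apply, Complex.star_def] using this

lemma spectral_sum (A : Matrix (Fin n) (Fin n) ℂ) (hA : A.IsHermitian) :
    A = ∑ k, (hA.eigenvalues k : ℂ) • proj (col' hA.eigenvectorUnitary k) := by
  conv_lhs => rw [hA.spectral_theorem, Unitary.conjStarAlgAut_apply]
  ext i j
  simp only [Matrix.mul_apply, Matrix.diagonal_apply, Matrix.sum_apply, Matrix.smul_apply, Pi.smul_apply,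
    proj, vecMulVec_apply, col', Matrix.star_apply, Pi.star_apply, smul_eq_mul,
    Function.comp_apply, conjTranspose_apply, Complex.star_def,
    mul_ite, mul_zero, ite_mul, zero_mul, Finset.sum_ite_eq', Finset.sum_ite_eq,
    Finset.mem_univ, if_true]
  exact Finset.sum_congr rfl fun k _ => (mul_right_comm _ _ _).trans (mul_comm _ _)

lemma trace_proj (U : Matrix (Fin n) (Fin n) ℂ) (hU : star U * U = 1) (k : Fin n) :
    (proj (col' U k)).trace = 1 := by
  have := congrFun (congrFun hU k) k
  simp only [Matrix.mul_apply, Matrix.star_apply, Matrix.one_apply_eq, Complex.star_def] at this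
  simp only [Matrix.trace, Matrix.diag, proj, vecMulVec_apply, col', Pi.star_apply,
    Complex.star_def]
  rw [← this]
  exact Finset.sum_congr rfl fun i _ => by ring

end BistoAux
end BistoAuxSec

/-- A positive trace-preserving linear map `Φ` is unital iff for every
density matrix `ρ` the decreasingly ordered eigenvalue vector of `Φ ρ` is obtained from
that of `ρ` by applying a doubly stochastic matrix. -/
theorem unital_iff_eigenvalues_bistochastic {n : ℕ} (hn : 1 ≤ n)
    (Φ : Matrix (Fin n) (Fin n) ℂ →ₗ[ℂ] Matrix (Fin n) (Fin n) ℂ)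
    (hpos : IsPositiveMap Φ) (htp : IsTracePreserving Φ) :
    Φ 1 = 1 ↔
      ∀ ρ : Matrix (Fin n) (Fin n) ℂ, IsDensityMatrix ρ →
        ∃ B : Matrix (Fin n) (Fin n) ℝ, IsDoublyStochastic B ∧
          sortDesc (eigs (Φ ρ)) = B.mulVec (sortDesc (eigs ρ)) := by
  
  classical
  open BistoAux Matrix in
  constructor
  · -- unital → bistochastic relation on eigenvalues
    intro hunital ρ hρ
    obtain ⟨hps, htr⟩ := hρ
    have hρh : ρ.IsHermitian := hps.1
    have hAps : (Φ ρ).PosSemidef := hpos ρ hps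
    have hAh : (Φ ρ).IsHermitian := hAps.1
    have heigρ : eigs ρ = hρh.eigenvalues := dif_pos hρh
    have heigA : eigs (Φ ρ) = hAh.eigenvalues := dif_pos hAh
    set U : Matrix (Fin n) (Fin n) ℂ := (hρh.eigenvectorUnitary : Matrix (Fin n) (Fin n) ℂ) with hUdef
    set V : Matrix (Fin n) (Fin n) ℂ := (hAh.eigenvectorUnitary : Matrix (Fin n) (Fin n) ℂ) with hVdef
    have hUco : U * star U = 1 := Matrix.mem_unitaryGroup_iff.mp hρh.eigenvectorUnitary.2
    have hUiso : star U * U = 1 := Matrix.mem_unitaryGroup_iff'.mp hρh.eigenvectorUnitary.2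
    have hVco : V * star V = 1 := Matrix.mem_unitaryGroup_iff.mp hAh.eigenvectorUnitary.2
    have hViso : star V * V = 1 := Matrix.mem_unitaryGroup_iff'.mp hAh.eigenvectorUnitary.2
    set q : Fin n → Fin n → ℂ :=
      fun j k => star (col' V j) ⬝ᵥ (Φ (proj (col' U k)) *ᵥ col' V j) with hqdef
    have hqpos : ∀ j k, (0:ℂ) ≤ q j k := fun j k =>
      (hpos _ (proj_posSemidef _)).dotProduct_mulVec_nonneg _
    have hqre : ∀ j k, ((q j k).re : ℂ) = q j k := by
      intro j k
      obtain ⟨h1, h2⟩ := Complex.nonneg_iff.mp (hqpos j k)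
      exact Complex.ext (by simp) (by simp [← h2])
    set C : Fin n → Fin n → ℝ := fun j k => (q j k).re with hCdef
    have hrowC : ∀ j, ∑ k, C j k = 1 := by
      intro j
      have hc : ∑ k, q j k = 1 := by
        have h1 : star (col' V j) ⬝ᵥ ((∑ k, Φ (proj (col' U k))) *ᵥ col' V j)
            = ∑ k, q j k := quad_sum _ _ _
        rw [← map_sum, sum_proj U hUco, hunital] at h1
        rw [← h1, Matrix.one_mulVec]
        have h2 := congrFun (congrFun hViso j) j
        simp only [Matrix.mul_apply, Matrix.star_apply, Matrix.one_apply_eq,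
          Complex.star_def] at h2
        rw [← h2]
        simp only [dotProduct, col', Pi.star_apply, Complex.star_def]
      calc ∑ k, C j k = (∑ k, q j k).re := by rw [Complex.re_sum]
        _ = 1 := by rw [hc]; simp
    have hcolC : ∀ k, ∑ j, C j k = 1 := by
      intro k
      have hc : ∑ j, q j k = 1 := by
        rw [hqdef]
        rw [sum_quad_trace (Φ (proj (col' U k))) V hVco, htp]
        exact trace_proj U hUiso k
      calc ∑ j, C j k = (∑ j, q j k).re := by rw [Complex.re_sum]
        _ = 1 := by rw [hc]; simp
    have hmu : ∀ j, ∑ k, C j k * hρh.eigenvalues k = hAh.eigenvalues j := by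
      intro j
      have hc : ∑ k, (hρh.eigenvalues k : ℂ) * q j k = (hAh.eigenvalues j : ℂ) := by
        have h1 : Φ ρ = ∑ k, (hρh.eigenvalues k : ℂ) • Φ (proj (col' U k)) := by
          conv_lhs => rw [spectral_sum ρ hρh]
          rw [map_sum]
          exact Finset.sum_congr rfl fun k _ => map_smul Φ _ _
        calc ∑ k, (hρh.eigenvalues k : ℂ) * q j k
            = ∑ k, star (col' V j) ⬝ᵥ
                (((hρh.eigenvalues k : ℂ) • Φ (proj (col' U k))) *ᵥ col' V j) :=
              Finset.sum_congr rfl fun k _ => (quad_smul _ _ _).symm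
          _ = star (col' V j) ⬝ᵥ
                ((∑ k, (hρh.eigenvalues k : ℂ) • Φ (proj (col' U k))) *ᵥ col' V j) :=
              (quad_sum _ _ _).symm
          _ = star (col' V j) ⬝ᵥ (Φ ρ *ᵥ col' V j) := by rw [← h1]
          _ = (hAh.eigenvalues j : ℂ) := quad_eigen (Φ ρ) hAh j
      calc ∑ k, C j k * hρh.eigenvalues k
          = (∑ k, (hρh.eigenvalues k : ℂ) * q j k).re := by
            rw [Complex.re_sum]
            refine Finset.sum_congr rfl fun k _ => ?_
            rw [← hqre j k, ← Complex.ofReal_mul, Complex.ofReal_re, mul_comm]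
        _ = hAh.eigenvalues j := by rw [hc]; simp
    set σ : Equiv.Perm (Fin n) := Fin.revPerm.trans (Tuple.sort (eigs (Φ ρ))) with hσdef
    set τ : Equiv.Perm (Fin n) := Fin.revPerm.trans (Tuple.sort (eigs ρ)) with hτdef
    refine ⟨Matrix.of (fun i k => C (σ i) (τ k)), ⟨?_, ?_, ?_⟩, ?_⟩
    · intro i k
      exact (Complex.nonneg_iff.mp (hqpos (σ i) (τ k))).1
    · intro i
      calc ∑ k, C (σ i) (τ k) = ∑ k, C (σ i) k := Equiv.sum_comp τ (fun k => C (σ i) k)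
        _ = 1 := hrowC _
    · intro k
      calc ∑ i, C (σ i) (τ k) = ∑ i, C i (τ k) := Equiv.sum_comp σ (fun j => C j (τ k))
        _ = 1 := hcolC _
    · funext i
      have hL : sortDesc (eigs (Φ ρ)) i = hAh.eigenvalues (σ i) := by
        simp [sortDesc, hσdef, Equiv.trans_apply, heigA]
      have hR : (Matrix.of (fun i k => C (σ i) (τ k))).mulVec (sortDesc (eigs ρ)) i
          = ∑ k, C (σ i) (τ k) * hρh.eigenvalues (τ k) := by
        simp [Matrix.mulVec, dotProduct, sortDesc, hτdef, Equiv.trans_apply, heigρ]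
      rw [hL, hR,
        Equiv.sum_comp τ (fun k => C (σ i) k * hρh.eigenvalues k), hmu (σ i)]
  · -- bistochastic relation → unital
    intro h
    have hn0 : (n:ℂ) ≠ 0 := Nat.cast_ne_zero.mpr (by omega)
    have hc0 : (0:ℝ) ≤ (n:ℝ)⁻¹ := by positivity
    set ρ : Matrix (Fin n) (Fin n) ℂ := (((n:ℝ)⁻¹ : ℝ) : ℂ) • 1 with hρdef
    have hρps : ρ.PosSemidef := by
      refine Matrix.PosSemidef.of_dotProduct_mulVec_nonneg ?_ ?_
      · show _ᴴ = _
        rw [hρdef, Matrix.conjTranspose_smul, Matrix.conjTranspose_one, Complex.star_def,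
          Complex.conj_ofReal]
      · intro x
        rw [hρdef, quad_smul, Matrix.one_mulVec]
        have hx : (0:ℂ) ≤ star x ⬝ᵥ x := by
          simp only [dotProduct, Pi.star_apply, Complex.star_def]
          apply Finset.sum_nonneg
          intro i _
          rw [mul_comm, Complex.mul_conj]
          exact Complex.zero_le_real.mpr (Complex.normSq_nonneg _)
        exact mul_nonneg (Complex.zero_le_real.mpr hc0) hx
    have hρtr : ρ.trace = 1 := by
      rw [hρdef, Matrix.trace_smul, Matrix.trace_one, Fintype.card_fin]
      rw [smul_eq_mul]
      push_cast
      field_simp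
    obtain ⟨B, hB, hBeq⟩ := h ρ ⟨hρps, hρtr⟩
    have hρh : ρ.IsHermitian := hρps.1
    have heigρ : eigs ρ = hρh.eigenvalues := dif_pos hρh
    have hlam : ∀ k, hρh.eigenvalues k = (n:ℝ)⁻¹ := by
      intro k
      have hd : star (hρh.eigenvectorUnitary : Matrix (Fin n) (Fin n) ℂ) * ρ *
          (hρh.eigenvectorUnitary : Matrix (Fin n) (Fin n) ℂ) = diagonal (RCLike.ofReal ∘ hρh.eigenvalues) := by
        have h0 := hρh.conjStarAlgAut_star_eigenvectorUnitary
        rwa [Unitary.conjStarAlgAut_apply, Unitary.coe_star, star_star] at h0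
      have hdd : star (hρh.eigenvectorUnitary : Matrix (Fin n) (Fin n) ℂ) * ρ *
          (hρh.eigenvectorUnitary : Matrix (Fin n) (Fin n) ℂ)
          = (((n:ℝ)⁻¹ : ℝ) : ℂ) • (1 : Matrix (Fin n) (Fin n) ℂ) := by
        show star (hρh.eigenvectorUnitary : Matrix (Fin n) (Fin n) ℂ) *
            ((((n:ℝ)⁻¹ : ℝ) : ℂ) • (1 : Matrix (Fin n) (Fin n) ℂ)) *
            (hρh.eigenvectorUnitary : Matrix (Fin n) (Fin n) ℂ) = _
        rw [Matrix.mul_smul, Matrix.smul_mul, Matrix.mul_one,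
          Matrix.mem_unitaryGroup_iff'.mp hρh.eigenvectorUnitary.2]
      have hd2 := hdd.symm.trans hd
      have h3 := congrFun (congrFun hd2 k) k
      simp only [Matrix.smul_apply, Matrix.one_apply_eq, Matrix.diagonal_apply_eq,
        Function.comp_apply, smul_eq_mul, mul_one] at h3
      exact (Complex.ofReal_injective h3.symm)
    have hAps : (Φ ρ).PosSemidef := hpos ρ hρps
    have hAh : (Φ ρ).IsHermitian := hAps.1
    have heigA : eigs (Φ ρ) = hAh.eigenvalues := dif_pos hAh
    have hmv : B.mulVec (sortDesc (eigs ρ)) = fun _ => (n:ℝ)⁻¹ := by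
      funext i
      have : ∀ k, sortDesc (eigs ρ) k = (n:ℝ)⁻¹ := by
        intro k; simp [sortDesc, heigρ, hlam]
      simp only [Matrix.mulVec, dotProduct, this]
      rw [← Finset.sum_mul, hB.2.1 i, one_mul]
    rw [hmv] at hBeq
    have hmuA : ∀ j, hAh.eigenvalues j = (n:ℝ)⁻¹ := by
      intro j
      have h3 := congrFun hBeq (((Tuple.sort (eigs (Φ ρ))).symm j).rev)
      simpa [sortDesc, Fin.rev_rev, heigA] using h3
    have hA : Φ ρ = (((n:ℝ)⁻¹ : ℝ) : ℂ) • 1 := by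
      conv_lhs => rw [hAh.spectral_theorem, Unitary.conjStarAlgAut_apply]
      have hdiag : Matrix.diagonal (RCLike.ofReal ∘ hAh.eigenvalues)
          = (((n:ℝ)⁻¹ : ℝ) : ℂ) • (1 : Matrix (Fin n) (Fin n) ℂ) := by
        ext i j
        by_cases hij : i = j <;>
          simp [Matrix.diagonal_apply, hij, hmuA, Matrix.smul_apply, Matrix.one_apply]
      rw [hdiag, Matrix.mul_smul, Matrix.smul_mul, Matrix.mul_one,
        Matrix.mem_unitaryGroup_iff.mp hAh.eigenvectorUnitary.2]
    have h1 : (1 : Matrix (Fin n) (Fin n) ℂ) = (n:ℂ) • ρ := by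
      rw [hρdef, smul_smul]
      have : (n:ℂ) * (((n:ℝ)⁻¹ : ℝ) : ℂ) = 1 := by
        push_cast
        field_simp
      rw [this, one_smul]
    calc Φ 1 = Φ ((n:ℂ) • ρ) := by rw [← h1]
      _ = (n:ℂ) • Φ ρ := map_smul Φ _ _
      _ = (n:ℂ) • ((((n:ℝ)⁻¹ : ℝ) : ℂ) • (1 : Matrix (Fin n) (Fin n) ℂ)) := by rw [hA]
      _ = 1 := by
          rw [smul_smul]
          have : (n:ℂ) * (((n:ℝ)⁻¹ : ℝ) : ℂ) = 1 := by push_cast; field_simp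
          rw [this, one_smul]
end

section
/- Let n ≥ 1 and let Φ : Matrix (Fin n) ℂ →ₗ[ℂ] Matrix (Fin n) ℂ be a positive trace-preserving linear map. Then Φ is unital (Φ 1 = 1) if and only if for every density matrix ρ the eigenvalue vector of Φ ρ is majorized by the eigenvalue vector of ρ; that is, for every k with 1 ≤ k ≤ n, the sum of the k largest eigenvalues of Φ ρ (counted with multiplicity) is at most the sum of the k largest eigenvalues of ρ, and the total sums of eigenvalues agree. -/
open scoped Matrix ComplexOrder

/-- The sum of the `k` largest entries of a vector: the maximum over all `k`-element
index subsets `s` of `∑ i ∈ s, v i`. -/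
noncomputable def kMaxSum {n : ℕ} (v : Fin n → ℝ) (k : ℕ) : ℝ :=
  ⨆ s : {s : Finset (Fin n) // s.card = k}, ∑ i ∈ s.1, v i

section AuxLemmas

namespace Aux
variable {n : ℕ}

lemma bdd (v : Fin n → ℝ) (k : ℕ) :
    BddAbove (Set.range fun s : {s : Finset (Fin n) // s.card = k} => ∑ i ∈ s.1, v i) :=
  Set.Finite.bddAbove (Set.finite_range _)

lemma le_kMaxSum (v : Fin n → ℝ) {k : ℕ} {s : Finset (Fin n)} (hs : s.card = k) :
    ∑ i ∈ s, v i ≤ kMaxSum v k :=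
  le_ciSup (bdd v k) ⟨s, hs⟩

lemma nonempty_subtype {k : ℕ} (hk : k ≤ n) :
    Nonempty {s : Finset (Fin n) // s.card = k} := by
  obtain ⟨t, -, ht⟩ := Finset.exists_subset_card_eq (s := (Finset.univ : Finset (Fin n)))
    (n := k) (by simpa using hk)
  exact ⟨⟨t, ht⟩⟩

lemma exists_max_set (v : Fin n → ℝ) {k : ℕ} (hk : k ≤ n) :
    ∃ s : Finset (Fin n), s.card = k ∧ kMaxSum v k = ∑ i ∈ s, v i ∧
      ∀ i ∈ s, ∀ j ∉ s, v j ≤ v i := by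
  classical
  have hne : (Finset.univ.powersetCard k : Finset (Finset (Fin n))).Nonempty := by
    obtain ⟨t⟩ := nonempty_subtype hk
    exact ⟨t.1, by simp [Finset.mem_powersetCard_univ, t.2]⟩
  obtain ⟨s, hsmem, hsmax⟩ :=
    (Finset.univ.powersetCard k).exists_max_image (fun s => ∑ i ∈ s, v i) hne
  have hcard : s.card = k := (Finset.mem_powersetCard_univ.mp hsmem)
  refine ⟨s, hcard, ?_, ?_⟩
  · refine le_antisymm ?_ (le_kMaxSum v hcard)
    haveI := nonempty_subtype hk
    exact ciSup_le fun t => hsmax t.1 (Finset.mem_powersetCard_univ.mpr t.2)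
  · intro i hi j hj
    by_contra hlt
    push_neg at hlt
    set s' : Finset (Fin n) := insert j (s.erase i) with hs'
    have hjni : j ∉ s.erase i := fun h => hj (Finset.mem_of_mem_erase h)
    have hcard' : s' ∈ Finset.univ.powersetCard k := by
      rw [Finset.mem_powersetCard_univ, hs', Finset.card_insert_of_notMem hjni,
        Finset.card_erase_of_mem hi, hcard]
      have : 0 < k := hcard ▸ Finset.card_pos.mpr ⟨i, hi⟩
      omega
    have hsum' : ∑ x ∈ s', v x = v j + (∑ x ∈ s, v x - v i) := by
      rw [hs', Finset.sum_insert hjni, Finset.sum_erase_eq_sub hi]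
    have := hsmax s' hcard'
    rw [hsum'] at this
    linarith

lemma weighted_le_kMaxSum (v c : Fin n → ℝ) {k : ℕ} (hk1 : 1 ≤ k) (hk : k ≤ n)
    (hc0 : ∀ i, 0 ≤ c i) (hc1 : ∀ i, c i ≤ 1) (hcs : ∑ i, c i = (k : ℝ)) :
    ∑ i, c i * v i ≤ kMaxSum v k := by
  classical
  obtain ⟨s, hcard, hmax, htop⟩ := exists_max_set v hk
  have hsne : s.Nonempty := Finset.card_pos.mp (by omega)
  set t := s.inf' hsne v with ht
  have key1 : ∀ j ∉ s, v j ≤ t := fun j hj =>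
    Finset.le_inf' hsne v fun i hi => htop i hi j hj
  have key2 : ∀ i ∈ s, t ≤ v i := fun i hi => Finset.inf'_le v hi
  have htot : ∑ i ∈ s, c i + ∑ i ∈ sᶜ, c i = (k : ℝ) := by
    rw [Finset.sum_add_sum_compl]; exact hcs
  have hsplit : ∑ i ∈ s, c i * v i + ∑ i ∈ sᶜ, c i * v i = ∑ i, c i * v i :=
    Finset.sum_add_sum_compl s _
  have hsc : ∑ i ∈ s, (1 - c i) = ∑ i ∈ sᶜ, c i := by
    rw [Finset.sum_sub_distrib, Finset.sum_const, hcard, nsmul_eq_mul]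
    linarith
  have h1 : ∑ i ∈ sᶜ, c i * v i ≤ ∑ i ∈ s, (1 - c i) * v i := by
    calc ∑ i ∈ sᶜ, c i * v i ≤ ∑ i ∈ sᶜ, c i * t :=
          Finset.sum_le_sum fun j hj =>
            mul_le_mul_of_nonneg_left (key1 j (by simpa using hj)) (hc0 j)
      _ = (∑ i ∈ sᶜ, c i) * t := by rw [Finset.sum_mul]
      _ = (∑ i ∈ s, (1 - c i)) * t := by rw [hsc]
      _ = ∑ i ∈ s, (1 - c i) * t := by rw [Finset.sum_mul]
      _ ≤ ∑ i ∈ s, (1 - c i) * v i :=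
          Finset.sum_le_sum fun i hi =>
            mul_le_mul_of_nonneg_left (key2 i hi) (by linarith [hc1 i])
  have h2 : ∑ i ∈ s, c i * v i + ∑ i ∈ s, (1 - c i) * v i = ∑ i ∈ s, v i := by
    rw [← Finset.sum_add_distrib]
    exact Finset.sum_congr rfl fun i _ => by ring
  rw [hmax]
  linarith

end Aux

namespace MAux
open Matrix
variable {n : ℕ}

/-- conjugation of a real diagonal by V -/
noncomputable def cvd (V : Matrix (Fin n) (Fin n) ℂ) (d : Fin n → ℝ) :
    Matrix (Fin n) (Fin n) ℂ :=
  V * Matrix.diagonal (fun i => (d i : ℂ)) * star V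

lemma cvd_eq_spectral {A : Matrix (Fin n) (Fin n) ℂ} (hA : A.IsHermitian) :
    A = cvd (hA.eigenvectorUnitary : Matrix (Fin n) (Fin n) ℂ) hA.eigenvalues :=
  hA.spectral_theorem

lemma cvd_posSemidef (V : Matrix (Fin n) (Fin n) ℂ) {d : Fin n → ℝ}
    (hd : ∀ i, 0 ≤ d i) : (cvd V d).PosSemidef := by
  have h : (Matrix.diagonal (fun i => (d i : ℂ))).PosSemidef :=
    Matrix.posSemidef_diagonal_iff.mpr fun i => by
      rw [Complex.zero_le_real]; exact hd i
  simpa [cvd, Matrix.star_eq_conjTranspose] using h.mul_mul_conjTranspose_same V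

lemma cvd_mul {V : Matrix (Fin n) (Fin n) ℂ} (hV : star V * V = 1) (d e : Fin n → ℝ) :
    cvd V d * cvd V e = cvd V (fun i => d i * e i) := by
  simp only [cvd, Matrix.mul_assoc]
  rw [← Matrix.mul_assoc (star V) V, hV, one_mul,
    ← Matrix.mul_assoc (diagonal fun i => (d i : ℂ)) (diagonal fun i => (e i : ℂ)),
    diagonal_mul_diagonal]
  norm_cast

lemma cvd_trace {V : Matrix (Fin n) (Fin n) ℂ} (hV : star V * V = 1) (d : Fin n → ℝ) :
    (cvd V d).trace = ((∑ i, d i : ℝ) : ℂ) := by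
  rw [cvd, Matrix.trace_mul_comm, ← Matrix.mul_assoc, hV, one_mul, Matrix.trace_diagonal]
  push_cast
  rfl

lemma cvd_one {V : Matrix (Fin n) (Fin n) ℂ} (hV : V * star V = 1) :
    cvd V (fun _ => 1) = 1 := by
  simp [cvd, hV]

lemma cvd_sub (V : Matrix (Fin n) (Fin n) ℂ) (d e : Fin n → ℝ) :
    cvd V d - cvd V e = cvd V (d - e) := by
  simp only [cvd, ← Matrix.sub_mul, ← Matrix.mul_sub]
  congr 2
  ext a b
  by_cases h : a = b <;> simp [Matrix.sub_apply, Matrix.diagonal_apply, h]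

lemma diagonal_sum {ι : Type*} (t : Finset ι) (g : ι → Fin n → ℂ) :
    Matrix.diagonal (fun i => ∑ j ∈ t, g j i) = ∑ j ∈ t, Matrix.diagonal (g j) := by
  ext a b
  by_cases h : a = b <;>
    simp [Matrix.diagonal_apply, h, Matrix.sum_apply]

lemma cvd_sum {ι : Type*} (t : Finset ι) (V : Matrix (Fin n) (Fin n) ℂ)
    (f : ι → ℝ) (d : ι → Fin n → ℝ) :
    ∑ j ∈ t, (f j : ℂ) • cvd V (d j) = cvd V (fun i => ∑ j ∈ t, f j * d j i) := by
  have h1 : (fun i => ((∑ j ∈ t, f j * d j i : ℝ) : ℂ))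
      = fun i => ∑ j ∈ t, (f j : ℂ) * (d j i : ℂ) := by
    funext i; push_cast; rfl
  simp only [cvd, h1, diagonal_sum, Matrix.mul_sum, Matrix.sum_mul]
  refine Finset.sum_congr rfl fun j _ => ?_
  rw [show (fun i => (f j : ℂ) * (d j i : ℂ)) = (f j : ℂ) • (fun i => (d j i : ℂ)) from rfl,
    Matrix.diagonal_smul, mul_smul_comm, smul_mul_assoc]

lemma cvd_const {V : Matrix (Fin n) (Fin n) ℂ} (hV : V * star V = 1) (r : ℝ) :
    cvd V (fun _ => r) = (r : ℂ) • 1 := by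
  have h : (fun _ : Fin n => ((r : ℝ) : ℂ)) = (r : ℂ) • (fun _ : Fin n => (1 : ℂ)) := by
    funext i; simp
  rw [cvd, h, Matrix.diagonal_smul, mul_smul_comm, smul_mul_assoc, Matrix.diagonal_one,
    mul_one, hV]

lemma trace_eq_sum_eigs {A : Matrix (Fin n) (Fin n) ℂ} (hA : A.IsHermitian) :
    A.trace = ((∑ i, hA.eigenvalues i : ℝ) : ℂ) := by
  conv_lhs => rw [cvd_eq_spectral hA]
  exact cvd_trace (Unitary.coe_star_mul_self _) _

lemma psd_trace_nonneg {A : Matrix (Fin n) (Fin n) ℂ} (hA : A.PosSemidef) :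
    ∃ r : ℝ, 0 ≤ r ∧ A.trace = (r : ℂ) :=
  ⟨∑ i, hA.1.eigenvalues i, Finset.sum_nonneg fun i _ => hA.eigenvalues_nonneg i,
    trace_eq_sum_eigs hA.1⟩

lemma psd_trace_mul_nonneg {A B : Matrix (Fin n) (Fin n) ℂ}
    (hA : A.PosSemidef) (hB : B.PosSemidef) :
    ∃ r : ℝ, 0 ≤ r ∧ (A * B).trace = (r : ℂ) := by
  open scoped MatrixOrder in
  have h2 : (A * B).trace = (CFC.sqrt B * A * CFC.sqrt B).trace := by
    rw [show A * B = A * (CFC.sqrt B * CFC.sqrt B) by rw [CFC.sqrt_mul_sqrt_self B hB.nonneg],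
      ← Matrix.mul_assoc, Matrix.trace_mul_comm, ← Matrix.mul_assoc]
  open scoped MatrixOrder in
  have h3 : (CFC.sqrt B * A * CFC.sqrt B).PosSemidef := by
    have := hA.conjTranspose_mul_mul_same (CFC.sqrt B)
    rwa [(CFC.sqrt_nonneg B).posSemidef.1.eq] at this
  obtain ⟨r, hr, htr⟩ := psd_trace_nonneg h3
  exact ⟨r, hr, h2 ▸ htr⟩

end MAux

lemma eigs_eq_eigenvalues {n : ℕ} {A : Matrix (Fin n) (Fin n) ℂ} (hA : A.IsHermitian) :
    eigs A = hA.eigenvalues := dif_pos hA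

/-- The forward (unital ⇒ majorization inequality) core argument, Ky Fan style. -/
lemma forward_key {n : ℕ}
    (Φ : Matrix (Fin n) (Fin n) ℂ →ₗ[ℂ] Matrix (Fin n) (Fin n) ℂ)
    (hpos : IsPositiveMap Φ) (htp : IsTracePreserving Φ) (hone : Φ 1 = 1)
    (ρ : Matrix (Fin n) (Fin n) ℂ) (hρ : ρ.PosSemidef)
    {k : ℕ} (hk1 : 1 ≤ k) (hkn : k ≤ n) :
    kMaxSum (eigs (Φ ρ)) k ≤ kMaxSum (eigs ρ) k := by
  classical
  have hσ : (Φ ρ).PosSemidef := hpos ρ hρ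
  rw [eigs_eq_eigenvalues hσ.1, eigs_eq_eigenvalues hρ.1]
  set μ : Fin n → ℝ := hσ.1.eigenvalues with hμdef
  set lam : Fin n → ℝ := hρ.1.eigenvalues with hlamdef
  obtain ⟨s, hcard, hmax, -⟩ := Aux.exists_max_set μ hkn
  set V : Matrix (Fin n) (Fin n) ℂ := (hσ.1.eigenvectorUnitary : Matrix (Fin n) (Fin n) ℂ)
    with hVdef
  set U : Matrix (Fin n) (Fin n) ℂ := (hρ.1.eigenvectorUnitary : Matrix (Fin n) (Fin n) ℂ)
    with hUdef
  have hV1 : star V * V = 1 := Unitary.coe_star_mul_self _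
  have hV2 : V * star V = 1 := Unitary.coe_mul_star_self _
  have hU1 : star U * U = 1 := Unitary.coe_star_mul_self _
  have hU2 : U * star U = 1 := Unitary.coe_mul_star_self _
  set ind : Fin n → ℝ := fun i => if i ∈ s then 1 else 0 with hinddef
  set P : Matrix (Fin n) (Fin n) ℂ := MAux.cvd V ind with hPdef
  set Q : Fin n → Matrix (Fin n) (Fin n) ℂ :=
    fun j => MAux.cvd U (fun i => if i = j then 1 else 0) with hQdef
  have hPpsd : P.PosSemidef := MAux.cvd_posSemidef V fun i => by
    simp only [hinddef]; split <;> norm_num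
  have hQpsd : ∀ j, (Q j).PosSemidef := fun j =>
    MAux.cvd_posSemidef U (d := fun i => if i = j then 1 else 0) fun i => by
      by_cases h : i = j <;> simp [h]
  have h1P : (1 - P).PosSemidef := by
    rw [← MAux.cvd_one hV2, hPdef, MAux.cvd_sub]
    exact MAux.cvd_posSemidef V fun i => by
      simp only [Pi.sub_apply, hinddef]; split <;> norm_num
  have h1Q : ∀ j, (1 - Q j).PosSemidef := fun j => by
    rw [← MAux.cvd_one hU2, hQdef, MAux.cvd_sub]
    exact MAux.cvd_posSemidef U fun i => by
      simp only [Pi.sub_apply]; split <;> norm_num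
  have hQsum : ∑ j, Q j = 1 := by
    have h := MAux.cvd_sum Finset.univ U (fun _ => (1 : ℝ))
      (fun j i => if i = j then 1 else 0)
    simp only [Complex.ofReal_one, one_smul, one_mul] at h
    rw [hQdef, h]
    have : (fun i : Fin n => ∑ j, if i = j then (1 : ℝ) else 0) = fun _ => (1 : ℝ) := by
      funext i; simp
    rw [this, MAux.cvd_one hU2]
  have hρeq : ρ = ∑ j, (lam j : ℂ) • Q j := by
    rw [hQdef, MAux.cvd_sum]
    have : (fun i => ∑ j, lam j * if i = j then (1 : ℝ) else 0) = lam := by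
      funext i; simp
    rw [this]
    exact MAux.cvd_eq_spectral hρ.1
  have htraceP : P.trace = ((k : ℝ) : ℂ) := by
    rw [hPdef, MAux.cvd_trace hV1]
    congr 1
    rw [hinddef]
    simp [Finset.sum_ite_mem, hcard]
  have htraceQ : ∀ j, (Q j).trace = 1 := fun j => by
    rw [hQdef, MAux.cvd_trace hU1]
    norm_cast
    simp
  have hPσ : (P * Φ ρ).trace = ((∑ i ∈ s, μ i : ℝ) : ℂ) := by
    conv_lhs => rw [MAux.cvd_eq_spectral hσ.1]
    rw [← hμdef, ← hVdef, hPdef, MAux.cvd_mul hV1, MAux.cvd_trace hV1]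
    congr 1
    rw [hinddef]
    simp [ite_mul, Finset.sum_ite_mem]
  -- the weights
  set c : Fin n → ℝ := fun j => ((P * Φ (Q j)).trace).re with hcdef
  have hc : ∀ j, 0 ≤ c j ∧ (P * Φ (Q j)).trace = ((c j : ℝ) : ℂ) := by
    intro j
    obtain ⟨r, hr, htr⟩ := MAux.psd_trace_mul_nonneg hPpsd (hpos _ (hQpsd j))
    have : c j = r := by rw [hcdef]; simp [htr]
    exact ⟨this ▸ hr, by rw [this, htr]⟩
  have hc1 : ∀ j, c j ≤ 1 := by
    intro j
    obtain ⟨r, hr, htr⟩ := MAux.psd_trace_mul_nonneg h1P (hpos _ (hQpsd j))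
    have hexp : ((1 : Matrix (Fin n) (Fin n) ℂ) - P) * Φ (Q j)
        = Φ (Q j) - P * Φ (Q j) := by
      rw [Matrix.sub_mul, one_mul]
    rw [hexp, Matrix.trace_sub, htp, htraceQ j, (hc j).2] at htr
    have : (1 : ℝ) - c j = r := by exact_mod_cast htr
    linarith
  have hcsum : ∑ j, c j = (k : ℝ) := by
    have h : ∑ j, (P * Φ (Q j)).trace = ((k : ℝ) : ℂ) := by
      rw [← Matrix.trace_sum]
      rw [show ∑ j, P * Φ (Q j) = P * Φ (∑ j, Q j) by
        rw [map_sum, Matrix.mul_sum]]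
      rw [hQsum, hone, mul_one, htraceP]
    rw [show ∑ j, (P * Φ (Q j)).trace = ((∑ j, c j : ℝ) : ℂ) by
      push_cast
      exact Finset.sum_congr rfl fun j _ => (hc j).2] at h
    exact_mod_cast h
  -- combine
  have hkey : ∑ i ∈ s, μ i = ∑ j, c j * lam j := by
    have h : (P * Φ ρ).trace = ((∑ j, c j * lam j : ℝ) : ℂ) := by
      conv_lhs => rw [hρeq]
      rw [map_sum, Matrix.mul_sum, Matrix.trace_sum]
      push_cast
      refine Finset.sum_congr rfl fun j _ => ?_
      rw [map_smul, Matrix.mul_smul, Matrix.trace_smul, (hc j).2, smul_eq_mul]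
      push_cast
      ring
    rw [hPσ] at h
    exact_mod_cast h
  rw [hmax, hkey]
  exact Aux.weighted_le_kMaxSum lam c hk1 hkn (fun j => (hc j).1) hc1 hcsum

end AuxLemmas

/-- A positive trace-preserving linear map `Φ` is unital iff for every
density matrix `ρ` the eigenvalue vector of `Φ ρ` is majorized by that of `ρ`. -/
theorem unital_iff_majorization {n : ℕ} (hn : 1 ≤ n)
    (Φ : Matrix (Fin n) (Fin n) ℂ →ₗ[ℂ] Matrix (Fin n) (Fin n) ℂ)
    (hpos : IsPositiveMap Φ) (htp : IsTracePreserving Φ) :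
    Φ 1 = 1 ↔
      ∀ ρ : Matrix (Fin n) (Fin n) ℂ, IsDensityMatrix ρ →
        (∀ k : ℕ, 1 ≤ k → k ≤ n → kMaxSum (eigs (Φ ρ)) k ≤ kMaxSum (eigs ρ) k) ∧
        (∑ i, eigs (Φ ρ) i = ∑ i, eigs ρ i) := by
  constructor
  · intro hone ρ hρ
    have hσ : (Φ ρ).PosSemidef := hpos ρ hρ.1
    refine ⟨fun k hk1 hkn => forward_key Φ hpos htp hone ρ hρ.1 hk1 hkn, ?_⟩
    have h1 := MAux.trace_eq_sum_eigs hσ.1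
    have h2 := MAux.trace_eq_sum_eigs hρ.1.1
    rw [eigs_eq_eigenvalues hσ.1, eigs_eq_eigenvalues hρ.1.1]
    have := htp ρ
    rw [h1, h2] at this
    exact_mod_cast this
  · intro H
    have hn0 : (n : ℝ) ≠ 0 := Nat.cast_ne_zero.mpr (by omega)
    have hnC : (n : ℂ) ≠ 0 := Nat.cast_ne_zero.mpr (by omega)
    set cR : ℝ := (n : ℝ)⁻¹ with hcRdef
    set ρ : Matrix (Fin n) (Fin n) ℂ := ((cR : ℂ)) • 1 with hρdef
    have hρdiag : ρ = Matrix.diagonal (fun _ => (cR : ℂ)) := by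
      rw [hρdef]
      ext a b
      by_cases h : a = b <;>
        simp [Matrix.smul_apply, Matrix.one_apply, Matrix.diagonal_apply, h]
    have hρpsd : ρ.PosSemidef := by
      rw [hρdiag]
      exact Matrix.posSemidef_diagonal_iff.mpr fun i => by
        rw [Complex.zero_le_real]
        positivity
    have hρtr : ρ.trace = 1 := by
      have htr1 : (Matrix.trace (1 : Matrix (Fin n) (Fin n) ℂ)) = (n : ℂ) := by
        simp [Matrix.trace_one]
      rw [hρdef, Matrix.trace_smul, htr1, smul_eq_mul, hcRdef]
      push_cast
      field_simp
    have keyW : ∀ W : Matrix (Fin n) (Fin n) ℂ, star W * W = 1 →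
        star W * ρ * W = (cR : ℂ) • 1 := by
      intro W hW
      rw [hρdef, mul_smul_comm, smul_mul_assoc, mul_one, hW]
    have hlam : ∀ i, hρpsd.1.eigenvalues i = cR := by
      intro i
      have hst := hρpsd.1.conjStarAlgAut_star_eigenvectorUnitary
      have hdiag : Matrix.diagonal (RCLike.ofReal ∘ hρpsd.1.eigenvalues)
          = (cR : ℂ) • (1 : Matrix (Fin n) (Fin n) ℂ) := by
        rw [← hst, Unitary.conjStarAlgAut_apply, Unitary.coe_star, star_star]
        exact keyW _ (Unitary.coe_star_mul_self _)
      have h := congr_fun (congr_fun hdiag i) i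
      simp only [Matrix.diagonal_apply_eq, Matrix.smul_apply, Matrix.one_apply_eq,
        smul_eq_mul, mul_one, Function.comp_apply] at h
      exact RCLike.ofReal_inj.mp h
    have heigsρ : eigs ρ = fun _ => cR := by
      rw [eigs_eq_eigenvalues hρpsd.1]
      funext i
      exact hlam i
    have hkMaxρ : ∀ k : ℕ, k ≤ n → kMaxSum (eigs ρ) k = k * cR := by
      intro k hk
      haveI := Aux.nonempty_subtype (n := n) hk
      rw [heigsρ, kMaxSum]
      have h : ∀ s : {s : Finset (Fin n) // s.card = k},
          ∑ _i ∈ s.1, cR = (k : ℝ) * cR := fun s => by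
        rw [Finset.sum_const, s.2, nsmul_eq_mul]
      rw [iSup_congr h, ciSup_const]
    have hσpsd : (Φ ρ).PosSemidef := hpos ρ hρpsd
    obtain ⟨Hmaj, Hsum⟩ := H ρ ⟨hρpsd, hρtr⟩
    set μ : Fin n → ℝ := hσpsd.1.eigenvalues with hμdef
    have heigsσ : eigs (Φ ρ) = μ := eigs_eq_eigenvalues hσpsd.1
    have hμle : ∀ i, μ i ≤ cR := by
      intro i
      have h1 : μ i ≤ kMaxSum (eigs (Φ ρ)) 1 := by
        rw [heigsσ]
        simpa using Aux.le_kMaxSum μ (s := {i}) (Finset.card_singleton i)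
      have h2 := Hmaj 1 le_rfl hn
      rw [hkMaxρ 1 hn] at h2
      push_cast at h2
      linarith
    have hμsum : ∑ i, μ i = n * cR := by
      rw [← heigsσ, Hsum, heigsρ, Finset.sum_const, Finset.card_univ, Fintype.card_fin,
        nsmul_eq_mul]
    have hμ : ∀ i, μ i = cR := by
      by_contra hne
      push_neg at hne
      obtain ⟨i, hi⟩ := hne
      have hlt : ∑ j, μ j < ∑ _j : Fin n, cR :=
        Finset.sum_lt_sum (fun j _ => hμle j)
          ⟨i, Finset.mem_univ i, lt_of_le_of_ne (hμle i) hi⟩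
      rw [hμsum, Finset.sum_const, Finset.card_univ, Fintype.card_fin, nsmul_eq_mul] at hlt
      linarith
    have hΦρ : Φ ρ = ρ := by
      rw [MAux.cvd_eq_spectral hσpsd.1, ← hμdef, show μ = fun _ => cR from funext hμ,
        MAux.cvd_const (Unitary.coe_mul_star_self _), hρdef]
    have h1ρ : (1 : Matrix (Fin n) (Fin n) ℂ) = (n : ℂ) • ρ := by
      rw [hρdef, smul_smul]
      rw [show (n : ℂ) * (cR : ℂ) = 1 by
        rw [hcRdef]; push_cast; field_simp]
      rw [one_smul]
    calc Φ 1 = (n : ℂ) • Φ ρ := by rw [h1ρ, map_smul]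
      _ = (n : ℂ) • ρ := by rw [hΦρ]
      _ = 1 := h1ρ.symm
end

section
/- Let n ≥ 1 and let Φ : Matrix (Fin n) ℂ →ₗ[ℂ] Matrix (Fin n) ℂ be a positive trace-preserving linear map. Then Φ is unital (Φ 1 = 1) if and only if Φ does not decrease the von Neumann entropy, i.e. S(Φ ρ) ≥ S(ρ) for every density matrix ρ. -/
open scoped Matrix ComplexOrder

/-- The von Neumann entropy `S(ρ) = -∑ λ_k log λ_k` (with `0 · log 0 = 0`). -/
noncomputable def vnEntropy {n : ℕ} (A : Matrix (Fin n) (Fin n) ℂ) : ℝ :=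
  -∑ k, eigs A k * Real.log (eigs A k)

section Helpers

open Matrix Finset

variable {n : ℕ}

/-- rank-one projector from column `i` of `U`. -/
noncomputable def projCol (U : Matrix (Fin n) (Fin n) ℂ) (i : Fin n) :
    Matrix (Fin n) (Fin n) ℂ :=
  Matrix.of fun a b => U a i * star (U b i)

lemma projCol_posSemidef (U : Matrix (Fin n) (Fin n) ℂ) (i : Fin n) :
    (projCol U i).PosSemidef := by
  refine Matrix.posSemidef_iff_dotProduct_mulVec.mpr ⟨?_, ?_⟩
  · ext a b
    simp [projCol, Matrix.conjTranspose_apply, mul_comm]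
  · intro y
    have hmv : (projCol U i) *ᵥ y = fun a => U a i * ((fun b => star (U b i)) ⬝ᵥ y) := by
      funext a
      simp [projCol, Matrix.mulVec, dotProduct, Finset.mul_sum, mul_assoc]
    rw [hmv]
    have : star y ⬝ᵥ (fun a => U a i * ((fun b => star (U b i)) ⬝ᵥ y))
        = star ((fun b => star (U b i)) ⬝ᵥ y) * ((fun b => star (U b i)) ⬝ᵥ y) := by
      simp only [dotProduct, Finset.mul_sum, Finset.sum_mul, star_sum, star_mul', star_star,
        Pi.star_apply]
      rw [Finset.sum_comm]
      apply Finset.sum_congr rfl; intro a _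
      apply Finset.sum_congr rfl; intro b _
      ring
    rw [this]
    exact star_mul_self_nonneg _

lemma sum_projCol (U : Matrix.unitaryGroup (Fin n) ℂ) :
    ∑ i, projCol (U : Matrix (Fin n) (Fin n) ℂ) i = 1 := by
  have h := Matrix.mem_unitaryGroup_iff.mp U.2
  ext a b
  have := congrFun (congrFun h a) b
  simp only [Matrix.mul_apply, Matrix.star_apply] at this
  simpa [projCol, Matrix.sum_apply] using this

lemma trace_projCol (U : Matrix.unitaryGroup (Fin n) ℂ) (i : Fin n) :
    (projCol (U : Matrix (Fin n) (Fin n) ℂ) i).trace = 1 := by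
  have h := Matrix.mem_unitaryGroup_iff'.mp U.2
  have := congrFun (congrFun h i) i
  simp only [Matrix.mul_apply, Matrix.star_apply] at this
  simp only [Matrix.one_apply_eq] at this
  simp only [Matrix.trace, Matrix.diag, projCol, Matrix.of_apply]
  rw [← this]
  apply Finset.sum_congr rfl; intro a _
  ring

/-- spectral decomposition as a sum of rank-one projectors -/
lemma spectral_sum {A : Matrix (Fin n) (Fin n) ℂ} (hA : A.IsHermitian) :
    A = ∑ i, (hA.eigenvalues i : ℂ) •
      projCol (hA.eigenvectorUnitary : Matrix (Fin n) (Fin n) ℂ) i := by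
  conv_lhs => rw [hA.spectral_theorem, Unitary.conjStarAlgAut_apply]
  ext a b
  simp only [Matrix.mul_apply, Matrix.sum_apply, Matrix.smul_apply, projCol, Matrix.of_apply,
    Matrix.diagonal_apply, Matrix.star_apply, Function.comp_apply, smul_eq_mul]
  apply Finset.sum_congr rfl; intro i _
  simp only [mul_ite, mul_zero, ite_mul, zero_mul, Finset.sum_ite_eq', Finset.mem_univ, if_true]
  rw [mul_right_comm]; exact mul_comm _ _

/-- quadratic form at column `j` of `W` equals the `(j,j)` entry of `Wᴴ M W`. -/
lemma quad_eq_entry (W M : Matrix (Fin n) (Fin n) ℂ) (j : Fin n) :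
    star (fun a => W a j) ⬝ᵥ (M *ᵥ fun a => W a j) = (Wᴴ * M * W) j j := by
  simp only [Matrix.mul_apply, dotProduct, Matrix.mulVec, Matrix.conjTranspose_apply,
    Pi.star_apply, dotProduct, Finset.sum_mul, Finset.mul_sum]
  rw [Finset.sum_comm]
  apply Finset.sum_congr rfl; intro a _
  apply Finset.sum_congr rfl; intro b _
  ring

lemma sum_quad_eq_trace (W : Matrix.unitaryGroup (Fin n) ℂ) (M : Matrix (Fin n) (Fin n) ℂ) :
    ∑ j, star (fun a => (W : Matrix (Fin n) (Fin n) ℂ) a j) ⬝ᵥ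
      (M *ᵥ fun a => (W : Matrix (Fin n) (Fin n) ℂ) a j) = M.trace := by
  have h : ∀ j, star (fun a => (W : Matrix (Fin n) (Fin n) ℂ) a j) ⬝ᵥ
      (M *ᵥ fun a => (W : Matrix (Fin n) (Fin n) ℂ) a j)
      = ((W : Matrix (Fin n) (Fin n) ℂ)ᴴ * M * (W : Matrix (Fin n) (Fin n) ℂ)) j j :=
    fun j => quad_eq_entry _ M j
  simp only [h]
  have h2 : ((W : Matrix (Fin n) (Fin n) ℂ)ᴴ * M * (W : Matrix (Fin n) (Fin n) ℂ)).trace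
      = M.trace := by
    rw [Matrix.trace_mul_cycle, ← Matrix.star_eq_conjTranspose,
      Matrix.mem_unitaryGroup_iff.mp W.2, one_mul]
  rw [← h2]
  rfl

lemma vnEntropy_eq {A : Matrix (Fin n) (Fin n) ℂ} (hA : A.IsHermitian) :
    vnEntropy A = ∑ k, Real.negMulLog (hA.eigenvalues k) := by
  unfold vnEntropy eigs
  rw [dif_pos hA, ← Finset.sum_neg_distrib]
  apply Finset.sum_congr rfl; intro k _
  simp [Real.negMulLog]

lemma trace_eq_sum_eigenvalues {A : Matrix (Fin n) (Fin n) ℂ} (hA : A.IsHermitian) :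
    A.trace = ∑ i, (hA.eigenvalues i : ℂ) := by
  conv_lhs => rw [hA.spectral_theorem, Unitary.conjStarAlgAut_apply]
  rw [Matrix.trace_mul_cycle, Matrix.mem_unitaryGroup_iff'.mp hA.eigenvectorUnitary.2, one_mul,
    Matrix.trace_diagonal]
  rfl

lemma eigenvalues_smul_one (c : ℝ)
    (h : (((c : ℂ)) • (1 : Matrix (Fin n) (Fin n) ℂ)).IsHermitian) (i : Fin n) :
    h.eigenvalues i = c := by
  have hd := h.conjStarAlgAut_star_eigenvectorUnitary
  rw [Unitary.conjStarAlgAut_star_apply] at hd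
  have hU := Matrix.mem_unitaryGroup_iff'.mp h.eigenvectorUnitary.2
  rw [Matrix.mul_smul, mul_one, Matrix.smul_mul, hU] at hd
  have := congrFun (congrFun hd.symm i) i
  simp only [Matrix.diagonal_apply_eq, Matrix.smul_apply, Matrix.one_apply_eq,
    Function.comp_apply, smul_eq_mul, mul_one] at this
  have h2 := congrArg Complex.re this
  simpa using h2

lemma sum_mulVec' (M : Fin n → Matrix (Fin n) (Fin n) ℂ) (y : Fin n → ℂ) :
    (∑ i, M i) *ᵥ y = ∑ i, M i *ᵥ y := by
  funext a
  simp only [Matrix.mulVec, dotProduct, Matrix.sum_apply, Finset.sum_apply, Finset.sum_mul]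
  exact Finset.sum_comm

lemma dotProduct_finsum (y : Fin n → ℂ) (v : Fin n → Fin n → ℂ) :
    y ⬝ᵥ (∑ i, v i) = ∑ i, y ⬝ᵥ v i := by
  simp only [dotProduct, Finset.sum_apply, Finset.mul_sum]
  exact Finset.sum_comm

end Helpers
/-- A positive trace-preserving linear map `Φ` is unital iff it does not
decrease the von Neumann entropy of density matrices. -/
theorem unital_iff_vnEntropy_nondecreasing {n : ℕ} (hn : 1 ≤ n)
    (Φ : Matrix (Fin n) (Fin n) ℂ →ₗ[ℂ] Matrix (Fin n) (Fin n) ℂ)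
    (hpos : IsPositiveMap Φ) (htp : IsTracePreserving Φ) :
    Φ 1 = 1 ↔
      ∀ ρ : Matrix (Fin n) (Fin n) ℂ, IsDensityMatrix ρ →
        vnEntropy ρ ≤ vnEntropy (Φ ρ) := by
  constructor
  · -- unital ⇒ entropy nondecreasing
    intro hunital ρ hρ
    obtain ⟨hpsd, htr⟩ := hρ
    have hH : ρ.IsHermitian := hpsd.isHermitian
    have hσ : (Φ ρ).PosSemidef := hpos ρ hpsd
    have hσH : (Φ ρ).IsHermitian := hσ.isHermitian
    set U : Matrix (Fin n) (Fin n) ℂ := (hH.eigenvectorUnitary : Matrix (Fin n) (Fin n) ℂ)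
      with hU
    set lam : Fin n → ℝ := hH.eigenvalues with hlam
    set W : Matrix (Fin n) (Fin n) ℂ := (hσH.eigenvectorUnitary : Matrix (Fin n) (Fin n) ℂ)
      with hW
    set mu : Fin n → ℝ := hσH.eigenvalues with hmu
    -- the doubly stochastic matrix of transition weights
    set c : Fin n → Fin n → ℂ :=
      fun j i => star (fun a => W a j) ⬝ᵥ (Φ (projCol U i) *ᵥ fun a => W a j) with hc
    have hcnn : ∀ j i, 0 ≤ c j i := fun j i => Matrix.PosSemidef.dotProduct_mulVec_nonneg (hpos _ (projCol_posSemidef U i)) _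
    set B : Fin n → Fin n → ℝ := fun j i => (c j i).re with hB
    have hBnn : ∀ j i, 0 ≤ B j i := fun j i => by
      have := (Complex.le_def.mp (hcnn j i)).1
      simpa using this
    have hc_eq : ∀ j i, c j i = (B j i : ℂ) := by
      intro j i
      have him : (c j i).im = 0 := by
        have := (Complex.le_def.mp (hcnn j i)).2
        simpa using this.symm
      exact Complex.ext rfl (by simp [him])
    -- row sums are 1 (uses unitality)
    have hrow : ∀ j, ∑ i, B j i = 1 := by
      intro j
      have hsum : ∑ i, Φ (projCol U i) = 1 := by
        rw [← map_sum, sum_projCol hH.eigenvectorUnitary, hunital]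
      have hC : ∑ i, c j i = 1 := by
        have : ∑ i, c j i
            = star (fun a => W a j) ⬝ᵥ ((∑ i, Φ (projCol U i)) *ᵥ fun a => W a j) := by
          rw [sum_mulVec', dotProduct_finsum]
        rw [this, hsum, quad_eq_entry, mul_one, ← Matrix.star_eq_conjTranspose,
          Matrix.mem_unitaryGroup_iff'.mp hσH.eigenvectorUnitary.2]
        exact Matrix.one_apply_eq j
      have := hC
      simp only [hc_eq] at this
      exact_mod_cast this
    -- column sums are 1 (uses trace preservation)
    have hcol : ∀ i, ∑ j, B j i = 1 := by
      intro i
      have hC : ∑ j, c j i = 1 := by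
        rw [hc]
        have := sum_quad_eq_trace hσH.eigenvectorUnitary (Φ (projCol U i))
        rw [this, htp, trace_projCol hH.eigenvectorUnitary]
      have := hC
      simp only [hc_eq] at this
      exact_mod_cast this
    -- eigenvalues of Φ ρ as convex combinations
    have hmu_eq : ∀ j, mu j = ∑ i, B j i * lam i := by
      intro j
      have h1 : star (fun a => W a j) ⬝ᵥ (Φ ρ *ᵥ fun a => W a j) = (mu j : ℂ) := by
        rw [quad_eq_entry, ← Matrix.star_eq_conjTranspose, ← Unitary.conjStarAlgAut_star_apply (S := ℂ),
          hσH.conjStarAlgAut_star_eigenvectorUnitary]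
        simp
        rfl
      have h2 : Φ ρ = ∑ i, (lam i : ℂ) • Φ (projCol U i) := by
        conv_lhs => rw [spectral_sum hH, map_sum]
        simp
        rfl
      have h3 : (mu j : ℂ) = ∑ i, (lam i : ℂ) * c j i := by
        rw [← h1, h2]
        rw [sum_mulVec', dotProduct_finsum]
        apply Finset.sum_congr rfl; intro i _
        rw [Matrix.smul_mulVec, dotProduct_smul, smul_eq_mul]
      have h4 : (mu j : ℂ) = ((∑ i, B j i * lam i : ℝ) : ℂ) := by
        rw [h3]
        push_cast
        apply Finset.sum_congr rfl; intro i _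
        rw [hc_eq j i]; ring
      exact_mod_cast h4
    have hlam_nn : ∀ i, 0 ≤ lam i := hpsd.eigenvalues_nonneg
    -- Jensen
    have key : ∀ j, ∑ i, B j i * Real.negMulLog (lam i) ≤ Real.negMulLog (mu j) := by
      intro j
      have hJ := Real.concaveOn_negMulLog.le_map_sum (t := Finset.univ) (w := B j) (p := lam)
        (fun i _ => hBnn j i) (hrow j) (fun i _ => Set.mem_Ici.mpr (hlam_nn i))
      simp only [smul_eq_mul] at hJ
      calc ∑ i, B j i * Real.negMulLog (lam i)
          ≤ Real.negMulLog (∑ i, B j i * lam i) := hJ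
        _ = Real.negMulLog (mu j) := by rw [← hmu_eq j]
    rw [vnEntropy_eq hH, vnEntropy_eq hσH]
    calc ∑ i, Real.negMulLog (lam i)
        = ∑ i, (∑ j, B j i) * Real.negMulLog (lam i) := by
          apply Finset.sum_congr rfl; intro i _; rw [hcol i, one_mul]
      _ = ∑ j, ∑ i, B j i * Real.negMulLog (lam i) := by
          rw [Finset.sum_comm]
          apply Finset.sum_congr rfl; intro i _
          rw [Finset.sum_mul]
      _ ≤ ∑ j, Real.negMulLog (mu j) := Finset.sum_le_sum (fun j _ => key j)
  · -- entropy nondecreasing ⇒ unital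
    intro hent
    have hn0 : (0:ℝ) < (n:ℝ) := by exact_mod_cast Nat.lt_of_lt_of_le Nat.zero_lt_one hn
    set cR : ℝ := (n:ℝ)⁻¹ with hcR
    have hcpos : 0 < cR := by positivity
    set ρ₀ : Matrix (Fin n) (Fin n) ℂ := ((cR : ℂ)) • 1 with hρ₀
    have hpsd : ρ₀.PosSemidef := by
      have hdiag : ρ₀ = Matrix.diagonal (fun _ => (cR : ℂ)) := by
        ext a b
        simp [hρ₀, Matrix.one_apply, Matrix.diagonal, mul_ite, mul_one, mul_zero]
      rw [hdiag]
      refine Matrix.PosSemidef.diagonal fun _ => ?_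
      rw [Complex.le_def]
      constructor
      · simpa using hcpos.le
      · simp
    have htr0 : ρ₀.trace = 1 := by
      rw [hρ₀, Matrix.trace_smul, Matrix.trace_one]
      simp only [smul_eq_mul]
      rw [hcR]
      push_cast
      field_simp
      simp
    have hv := hent ρ₀ ⟨hpsd, htr0⟩
    have hH0 : ρ₀.IsHermitian := hpsd.isHermitian
    have heig0 : ∀ i, hH0.eigenvalues i = cR := fun i => eigenvalues_smul_one cR hH0 i
    have hlogn : Real.negMulLog cR = cR * Real.log n := by
      rw [Real.negMulLog, hcR, Real.log_inv]
      ring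
    have hEnt0 : vnEntropy ρ₀ = Real.log n := by
      rw [vnEntropy_eq hH0]
      simp only [heig0, hlogn, Finset.sum_const, Finset.card_univ, Fintype.card_fin,
        nsmul_eq_mul, hcR]
      field_simp
      rw [one_div, ← hcR, hlogn, hcR]
      field_simp
    -- the image state
    have hσpsd : (Φ ρ₀).PosSemidef := hpos ρ₀ hpsd
    have hσH : (Φ ρ₀).IsHermitian := hσpsd.isHermitian
    set mu : Fin n → ℝ := hσH.eigenvalues with hmu
    have hμnn : ∀ j, 0 ≤ mu j := hσpsd.eigenvalues_nonneg
    have hsum : ∑ j, mu j = 1 := by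
      have h1 : (Φ ρ₀).trace = 1 := by rw [htp, htr0]
      have h2 := trace_eq_sum_eigenvalues hσH
      rw [h1] at h2
      exact_mod_cast h2.symm
    have hwsum : ∑ _j : Fin n, cR = 1 := by
      simp only [Finset.sum_const, Finset.card_univ, Fintype.card_fin, nsmul_eq_mul, hcR]
      field_simp
    have hcomb : ∑ j, cR • mu j = cR := by
      simp only [smul_eq_mul, ← Finset.mul_sum, hsum, mul_one]
    -- Jensen and its equality case
    have hJ := Real.concaveOn_negMulLog.le_map_sum (t := Finset.univ)
      (w := fun _ => cR) (p := mu) (fun i _ => hcpos.le) hwsum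
      (fun i _ => Set.mem_Ici.mpr (hμnn i))
    rw [hcomb] at hJ
    have hge : Real.log n ≤ ∑ j, Real.negMulLog (mu j) := by
      rw [hEnt0, vnEntropy_eq hσH] at hv
      exact hv
    have hsum_f : ∑ j, cR • Real.negMulLog (mu j) = cR * Real.log n := by
      have hle : ∑ j, cR • Real.negMulLog (mu j) ≤ cR * Real.log n := by
        calc ∑ j, cR • Real.negMulLog (mu j) ≤ Real.negMulLog cR := hJ
          _ = cR * Real.log n := hlogn
      have hge' : cR * Real.log n ≤ ∑ j, cR • Real.negMulLog (mu j) := by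
        simp only [smul_eq_mul, ← Finset.mul_sum]
        exact mul_le_mul_of_nonneg_left hge hcpos.le
      exact le_antisymm hle hge'
    have hEqJ : Real.negMulLog (∑ j, cR • mu j) = ∑ j, cR • Real.negMulLog (mu j) := by
      rw [hcomb, hsum_f, hlogn]
    have hmueq : ∀ j, mu j = cR := by
      have := (Real.strictConcaveOn_negMulLog.map_sum_eq_iff (t := Finset.univ)
        (w := fun _ => cR) (p := mu) (fun i _ => hcpos) hwsum
        (fun i _ => Set.mem_Ici.mpr (hμnn i))).mp hEqJ
      intro j
      have hj := this j (Finset.mem_univ j)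
      rw [hj, hcomb]
    -- conclude Φ ρ₀ = ρ₀
    have hσ_eq : Φ ρ₀ = ρ₀ := by
      have hd : Matrix.diagonal (RCLike.ofReal ∘ mu : Fin n → ℂ) = ((cR : ℂ)) • 1 := by
        ext a b
        by_cases hab : a = b
        · subst hab
          simp [Matrix.diagonal_apply_eq, hmueq a, Matrix.one_apply_eq]
        · simp [Matrix.diagonal_apply_ne _ hab, Matrix.one_apply_ne hab]
      have hspec := hσH.spectral_theorem
      rw [hd] at hspec
      rw [hspec, Unitary.conjStarAlgAut_apply, Matrix.mul_smul, Matrix.smul_mul, mul_one,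
        Matrix.mem_unitaryGroup_iff.mp hσH.eigenvectorUnitary.2, hρ₀]
    -- conclude unitality
    have h1 : (1 : Matrix (Fin n) (Fin n) ℂ) = ((n : ℂ)) • ρ₀ := by
      rw [hρ₀, smul_smul]
      have : ((n : ℂ)) * ((cR : ℂ)) = 1 := by
        rw [hcR]
        push_cast
        field_simp
      rw [this, one_smul]
    calc Φ 1 = Φ (((n : ℂ)) • ρ₀) := by rw [← h1]
      _ = ((n : ℂ)) • Φ ρ₀ := by rw [map_smul]
      _ = ((n : ℂ)) • ρ₀ := by rw [hσ_eq]
      _ = 1 := h1.symm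
end

section
/- Let n ≥ 1, let p be a real number with 1 < p, and let Φ : Matrix (Fin n) ℂ →ₗ[ℂ] Matrix (Fin n) ℂ be a positive trace-preserving linear map. Then Φ is unital (Φ 1 = 1) if and only if for every density matrix ρ one has (∑_k λ_k(Φρ)^p)^{1/p} ≤ (∑_k λ_k(ρ)^p)^{1/p}, where λ_k(·) denotes the eigenvalues of the density matrix; equivalently, Φ does not decrease the entropy N_p(ρ) = 1 − (∑_k λ_k(ρ)^p)^{1/p} (i.e., Φ does not increase the Schatten p-norm on density matrices). -/
open scoped Matrix ComplexOrder

section Helpers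

open Matrix Finset

variable {n : ℕ}

lemma psd_diag_nonneg {A : Matrix (Fin n) (Fin n) ℂ} (hA : A.PosSemidef) (j : Fin n) :
    0 ≤ A j j := by
  have := hA.dotProduct_mulVec_nonneg (Pi.single j 1)
  simpa [dotProduct, Matrix.mulVec, Pi.single_apply] using this

lemma diagonal_eq_sum (d : Fin n → ℂ) :
    Matrix.diagonal d = ∑ k, d k • Matrix.diagonal (Pi.single k 1) := by
  ext i j
  simp only [Matrix.sum_apply, Matrix.smul_apply, Matrix.diagonal_apply, Pi.single_apply,
    smul_eq_mul]
  by_cases h : i = j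
  · subst h; simp
  · simp [h]

lemma trace_eq_sum_eigs {A : Matrix (Fin n) (Fin n) ℂ} (hA : A.IsHermitian) :
    A.trace = ∑ k, (hA.eigenvalues k : ℂ) := by
  conv_lhs => rw [hA.spectral_theorem, Unitary.conjStarAlgAut_apply]
  rw [Matrix.trace_mul_cycle,
    (Matrix.mem_unitaryGroup_iff').mp hA.eigenvectorUnitary.2, one_mul,
    Matrix.trace_diagonal]
  rfl

lemma scalar_eigs (c : ℝ) (h : (((c : ℂ)) • 1 : Matrix (Fin n) (Fin n) ℂ).IsHermitian)
    (k : Fin n) : h.eigenvalues k = c := by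
  have h1 : star (h.eigenvectorUnitary : Matrix (Fin n) (Fin n) ℂ) * ((c : ℂ) • 1)
      * (h.eigenvectorUnitary : Matrix (Fin n) (Fin n) ℂ) = Matrix.diagonal (RCLike.ofReal ∘ h.eigenvalues) := by
    rw [← h.conjStarAlgAut_star_eigenvectorUnitary, Unitary.conjStarAlgAut_star_apply]
  have h2 : star (h.eigenvectorUnitary : Matrix (Fin n) (Fin n) ℂ) * ((c : ℂ) • 1)
      * (h.eigenvectorUnitary : Matrix (Fin n) (Fin n) ℂ) = (c : ℂ) • 1 := by
    rw [Matrix.mul_smul, Matrix.smul_mul, Matrix.mul_one,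
      Matrix.mem_unitaryGroup_iff'.mp h.eigenvectorUnitary.2]
  rw [h2] at h1
  have h3 := congrFun (congrFun h1 k) k
  simp only [Matrix.diagonal_apply_eq, Function.comp_apply, Matrix.smul_apply,
    Matrix.one_apply_eq, smul_eq_mul, mul_one] at h3
  have h4 := congrArg Complex.re h3
  simpa using h4.symm

lemma scalar_psd {c : ℝ} (hc : 0 ≤ c) :
    (((c : ℂ)) • 1 : Matrix (Fin n) (Fin n) ℂ).PosSemidef := by
  refine Matrix.PosSemidef.of_dotProduct_mulVec_nonneg ?_ ?_
  · show _ᴴ = _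
    rw [Matrix.conjTranspose_smul, Matrix.conjTranspose_one]
    congr 1
    simp [Complex.star_def, Complex.conj_ofReal]
  · intro x
    rw [Matrix.smul_mulVec, Matrix.one_mulVec, dotProduct_smul, smul_eq_mul]
    refine mul_nonneg ?_ (dotProduct_star_self_nonneg x)
    exact_mod_cast hc

/-- Core inequality: a unital positive trace-preserving map does not increase `∑ λ_k ^ p`. -/
lemma key_sum_rpow_le {n : ℕ} {p : ℝ} (hp : 1 < p)
    (Φ : Matrix (Fin n) (Fin n) ℂ →ₗ[ℂ] Matrix (Fin n) (Fin n) ℂ)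
    (hpos : IsPositiveMap Φ) (htp : IsTracePreserving Φ) (hunital : Φ 1 = 1)
    {ρ : Matrix (Fin n) (Fin n) ℂ} (hρ : ρ.PosSemidef) :
    ∑ j, ((hpos ρ hρ).1.eigenvalues j) ^ p ≤ ∑ k, (hρ.1.eigenvalues k) ^ p := by
  set hH := hρ.1 with hHdef
  set hσ : (Φ ρ).PosSemidef := hpos ρ hρ with hσdef
  set hσH := hσ.1 with hσHdef
  set V : Matrix (Fin n) (Fin n) ℂ := (hH.eigenvectorUnitary : Matrix (Fin n) (Fin n) ℂ) with hV
  set W : Matrix (Fin n) (Fin n) ℂ := (hσH.eigenvectorUnitary : Matrix (Fin n) (Fin n) ℂ) with hW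
  set lam := hH.eigenvalues with hlam
  set mu := hσH.eigenvalues with hmu'
  set P : Fin n → Matrix (Fin n) (Fin n) ℂ :=
    fun k => V * Matrix.diagonal (Pi.single k 1) * star V with hP
  have hsingle : ∀ k : Fin n, (0 : Fin n → ℂ) ≤ Pi.single k 1 := by
    intro k i
    by_cases h : i = k <;> simp [Pi.single_apply, h]
  have hPpsd : ∀ k, (P k).PosSemidef := by
    intro k
    have h1 : (Matrix.diagonal (Pi.single k (1:ℂ))).PosSemidef :=
      Matrix.PosSemidef.diagonal (hsingle k)
    simpa [hP, Matrix.star_eq_conjTranspose] using h1.mul_mul_conjTranspose_same V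
  have hVstar : star V * V = 1 := by
    rw [hV]; exact Matrix.mem_unitaryGroup_iff'.mp hH.eigenvectorUnitary.2
  have hVmul : V * star V = 1 := by
    rw [hV]; exact Matrix.mem_unitaryGroup_iff.mp hH.eigenvectorUnitary.2
  have hWstar : star W * W = 1 := by
    rw [hW]; exact Matrix.mem_unitaryGroup_iff'.mp hσH.eigenvectorUnitary.2
  have hWmul : W * star W = 1 := by
    rw [hW]; exact Matrix.mem_unitaryGroup_iff.mp hσH.eigenvectorUnitary.2
  have hPtr : ∀ k, (P k).trace = 1 := by
    intro k
    rw [hP]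
    rw [Matrix.trace_mul_cycle, hVstar, Matrix.one_mul,
      Matrix.trace_diagonal]
    simp
  have hPsum : ∑ k, P k = 1 := by
    have h1 : ∑ k : Fin n, Matrix.diagonal (Pi.single k (1:ℂ)) = 1 := by
      have := diagonal_eq_sum (fun _ : Fin n => (1:ℂ))
      simpa [Matrix.diagonal_one] using this.symm
    calc ∑ k, P k = V * (∑ k : Fin n, Matrix.diagonal (Pi.single k (1:ℂ))) * star V := by
          rw [Matrix.mul_sum, Finset.sum_mul]
      _ = 1 := by rw [h1, Matrix.mul_one, hVmul]
  have hρdec : ρ = ∑ k, (lam k : ℂ) • P k := by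
    conv_lhs => rw [hH.spectral_theorem, Unitary.conjStarAlgAut_apply]
    rw [show (Matrix.diagonal (RCLike.ofReal ∘ lam) : Matrix (Fin n) (Fin n) ℂ)
        = ∑ k, (lam k : ℂ) • Matrix.diagonal (Pi.single k 1) from diagonal_eq_sum _]
    rw [Matrix.mul_sum, Finset.sum_mul]
    congr 1
    ext k : 1
    rw [hP, Matrix.mul_smul, Matrix.smul_mul]
  have hΦρ : Φ ρ = ∑ k, (lam k : ℂ) • Φ (P k) := by
    conv_lhs => rw [hρdec]
    simp [map_sum]
  set C : Fin n → Fin n → ℂ := fun j k => (star W * Φ (P k) * W) j j with hCdef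
  have hCpsd : ∀ k, (star W * Φ (P k) * W).PosSemidef := by
    intro k
    simpa [Matrix.star_eq_conjTranspose] using
      (hpos _ (hPpsd k)).conjTranspose_mul_mul_same W
  have hCnn : ∀ j k, 0 ≤ C j k := fun j k => psd_diag_nonneg (hCpsd k) j
  set B : Fin n → Fin n → ℝ := fun j k => (C j k).re with hBdef
  have hBnn : ∀ j k, 0 ≤ B j k := fun j k => (Complex.nonneg_iff.mp (hCnn j k)).1
  have hmuC : ∀ j, (mu j : ℂ) = ∑ k, (lam k : ℂ) * C j k := by
    intro j
    have hdiag : star W * (Φ ρ) * W = Matrix.diagonal (RCLike.ofReal ∘ mu) := by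
      rw [hW, hmu', ← hσH.conjStarAlgAut_star_eigenvectorUnitary, Unitary.conjStarAlgAut_star_apply]
    have h2 : (star W * (Φ ρ) * W) j j = (mu j : ℂ) := by
      rw [show star W * (Φ ρ) * W = Matrix.diagonal (RCLike.ofReal ∘ mu) from hdiag]
      simp [Matrix.diagonal_apply]
    rw [← h2, hΦρ, Matrix.mul_sum, Finset.sum_mul]
    simp [Matrix.sum_apply, Matrix.mul_smul, Matrix.smul_mul, hCdef]
  have hrow : ∀ j, ∑ k, C j k = 1 := by
    intro j
    have h1 : ∑ k, star W * Φ (P k) * W = star W * Φ 1 * W := by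
      rw [← hPsum, map_sum, Matrix.mul_sum, Finset.sum_mul]
    calc ∑ k, C j k = (∑ k, star W * Φ (P k) * W) j j := by
          rw [hCdef]; simp [Matrix.sum_apply]
      _ = (star W * Φ 1 * W) j j := by rw [h1]
      _ = 1 := by
          rw [hunital, Matrix.mul_one, hWstar]
          simp [Matrix.one_apply]
  have hcol : ∀ k, ∑ j, C j k = 1 := by
    intro k
    calc ∑ j, C j k = (star W * Φ (P k) * W).trace := by
          rw [hCdef]; simp [Matrix.trace, Matrix.diag]
      _ = (Φ (P k)).trace := by
          rw [Matrix.trace_mul_cycle, hWmul, Matrix.one_mul]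
      _ = 1 := by rw [htp, hPtr]
  have hBrow : ∀ j, ∑ k, B j k = 1 := by
    intro j
    have := congrArg Complex.re (hrow j)
    simpa [Complex.re_sum] using this
  have hBcol : ∀ k, ∑ j, B j k = 1 := by
    intro k
    have := congrArg Complex.re (hcol k)
    simpa [Complex.re_sum] using this
  have hlnn : ∀ k, 0 ≤ lam k := fun k => hρ.eigenvalues_nonneg k
  have hmuB : ∀ j, mu j = ∑ k, B j k * lam k := by
    intro j
    have h1 : mu j = ∑ k, lam k * B j k := by
      have := congrArg Complex.re (hmuC j)
      simpa [Complex.re_sum, Complex.re_ofReal_mul] using this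
    rw [h1]
    exact Finset.sum_congr rfl fun k _ => mul_comm _ _
  have hj : ∀ j, mu j ^ p ≤ ∑ k, B j k * lam k ^ p := by
    intro j
    have h := (convexOn_rpow hp.le).map_sum_le (t := Finset.univ) (w := B j) (p := lam)
      (fun k _ => hBnn j k) (hBrow j) (fun k _ => hlnn k)
    rw [hmuB j]
    simpa [smul_eq_mul] using h
  calc ∑ j, mu j ^ p ≤ ∑ j, ∑ k, B j k * lam k ^ p := Finset.sum_le_sum fun j _ => hj j
    _ = ∑ k, (∑ j, B j k) * lam k ^ p := by
        rw [Finset.sum_comm]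
        exact Finset.sum_congr rfl fun k _ => (Finset.sum_mul _ _ _).symm
    _ = ∑ k, lam k ^ p := Finset.sum_congr rfl fun k _ => by rw [hBcol k, one_mul]

/-- If all eigenvalues of `Φ ((1/n) • 1)` equal `1/n`, then `Φ` is unital. -/
lemma unital_of_eigs (hn : 1 ≤ n)
    (Φ : Matrix (Fin n) (Fin n) ℂ →ₗ[ℂ] Matrix (Fin n) (Fin n) ℂ)
    (hpos : IsPositiveMap Φ)
    (hρ0 : ((((n : ℝ)⁻¹ : ℝ) : ℂ) • (1 : Matrix (Fin n) (Fin n) ℂ)).PosSemidef)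
    (hμ : ∀ k, (hpos _ hρ0).1.eigenvalues k = (n : ℝ)⁻¹) :
    Φ 1 = 1 := by
  have hn0 : ((n : ℝ) : ℂ) ≠ 0 := by
    exact_mod_cast (Nat.cast_ne_zero (R := ℝ)).mpr (by omega)
  have hσH := (hpos _ hρ0).1
  have hμ' : ∀ k, hσH.eigenvalues k = (n : ℝ)⁻¹ := hμ
  have hspec := hσH.spectral_theorem
  have hdiag : Matrix.diagonal (RCLike.ofReal ∘ hσH.eigenvalues)
      = (((n : ℝ)⁻¹ : ℝ) : ℂ) • (1 : Matrix (Fin n) (Fin n) ℂ) := by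
    ext i j
    by_cases h : i = j
    · subst h
      simp only [Matrix.diagonal_apply_eq, Function.comp_apply, Matrix.smul_apply,
        Matrix.one_apply_eq, smul_eq_mul, mul_one, hμ' i]
      push_cast
      ring
    · simp [Matrix.diagonal_apply, Matrix.one_apply, h]
  have hσ : Φ ((((n : ℝ)⁻¹ : ℝ) : ℂ) • 1) = (((n : ℝ)⁻¹ : ℝ) : ℂ) • 1 := by
    conv_lhs => rw [hspec, Unitary.conjStarAlgAut_apply]
    rw [hdiag, Matrix.mul_smul, Matrix.smul_mul, Matrix.mul_one,
      Matrix.mem_unitaryGroup_iff.mp hσH.eigenvectorUnitary.2]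
  have h4 : ((n:ℝ):ℂ) * (((n:ℝ)⁻¹ : ℝ):ℂ) = 1 := by
    push_cast
    field_simp
  have h5 := congrArg (fun M => ((n : ℝ) : ℂ) • M) hσ
  simp only [_root_.map_smul, smul_smul] at h5
  rw [h4, one_smul, one_smul] at h5
  exact h5

end Helpers

/-- For `1 < p`, a positive trace-preserving linear map `Φ` is unital iff
it does not increase the Schatten `p`-norm `(∑ λ_k^p)^(1/p)` on density matrices
(equivalently, it does not decrease `N_p(ρ) = 1 - (∑ λ_k^p)^(1/p)`). -/
theorem unital_iff_schatten_norm_nonincreasing {n : ℕ} (hn : 1 ≤ n)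
    {p : ℝ} (hp : 1 < p)
    (Φ : Matrix (Fin n) (Fin n) ℂ →ₗ[ℂ] Matrix (Fin n) (Fin n) ℂ)
    (hpos : IsPositiveMap Φ) (htp : IsTracePreserving Φ) :
    Φ 1 = 1 ↔
      ∀ ρ : Matrix (Fin n) (Fin n) ℂ, IsDensityMatrix ρ →
        (∑ k, eigs (Φ ρ) k ^ p) ^ (1 / p) ≤ (∑ k, eigs ρ k ^ p) ^ (1 / p) := by
  have hp0 : (0:ℝ) < p := lt_trans one_pos hp
  constructor
  · intro hunital ρ hρd
    obtain ⟨hpsd, -⟩ := hρd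
    have hkey := key_sum_rpow_le hp Φ hpos htp hunital hpsd
    have e1 : eigs ρ = hpsd.1.eigenvalues := by rw [eigs, dif_pos hpsd.1]
    have e2 : eigs (Φ ρ) = (hpos ρ hpsd).1.eigenvalues := by
      rw [eigs, dif_pos (hpos ρ hpsd).1]
    rw [e1, e2]
    exact Real.rpow_le_rpow
      (Finset.sum_nonneg fun j _ =>
        Real.rpow_nonneg ((hpos ρ hpsd).eigenvalues_nonneg j) p)
      hkey (by positivity)
  · intro hmono
    have hninv : (0:ℝ) < (n : ℝ)⁻¹ := by
      have : (0:ℝ) < (n:ℝ) := by exact_mod_cast Nat.lt_of_lt_of_le Nat.zero_lt_one hn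
      positivity
    have hρ0psd : ((((n : ℝ)⁻¹ : ℝ) : ℂ) • (1 : Matrix (Fin n) (Fin n) ℂ)).PosSemidef :=
      scalar_psd hninv.le
    set ρ0 : Matrix (Fin n) (Fin n) ℂ := (((n : ℝ)⁻¹ : ℝ) : ℂ) • 1 with hρ0def
    have hnR : (0:ℝ) < (n:ℝ) := by exact_mod_cast Nat.lt_of_lt_of_le Nat.zero_lt_one hn
    have htr0 : ρ0.trace = 1 := by
      rw [hρ0def, Matrix.trace_smul, Matrix.trace_one]
      simp only [Fintype.card_fin, smul_eq_mul]
      push_cast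
      field_simp
    have hσpsd : (Φ ρ0).PosSemidef := hpos ρ0 hρ0psd
    set mu := hσpsd.1.eigenvalues with hmudef
    have hμnn : ∀ k, 0 ≤ mu k := fun k => hσpsd.eigenvalues_nonneg k
    have hμsum : ∑ k, mu k = 1 := by
      have h1 := trace_eq_sum_eigs hσpsd.1
      rw [htp, htr0] at h1
      exact_mod_cast h1.symm
    have hmono' := hmono ρ0 ⟨hρ0psd, htr0⟩
    have e1 : eigs ρ0 = hρ0psd.1.eigenvalues := by rw [eigs, dif_pos hρ0psd.1]
    have e2 : eigs (Φ ρ0) = mu := by rw [hmudef, eigs, dif_pos hσpsd.1]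
    rw [e1, e2] at hmono'
    have eρ0 : ∀ k, hρ0psd.1.eigenvalues k = (n:ℝ)⁻¹ := fun k => scalar_eigs _ _ k
    have hrhs : ∑ k : Fin n, hρ0psd.1.eigenvalues k ^ p = (n:ℝ) * ((n:ℝ)⁻¹) ^ p := by
      rw [Finset.sum_congr rfl fun k _ => by rw [eρ0 k]]
      rw [Finset.sum_const, Finset.card_univ, Fintype.card_fin, nsmul_eq_mul]
    have hSnn : (0:ℝ) ≤ ∑ k, mu k ^ p :=
      Finset.sum_nonneg fun k _ => Real.rpow_nonneg (hμnn k) p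
    have hS : ∑ k, mu k ^ p ≤ (n:ℝ) * ((n:ℝ)⁻¹) ^ p := by
      have h2 := Real.rpow_le_rpow (by positivity) hmono' hp0.le
      rw [one_div, Real.rpow_inv_rpow hSnn hp0.ne',
        Real.rpow_inv_rpow (Finset.sum_nonneg fun k _ =>
          Real.rpow_nonneg (by rw [eρ0 k]; exact hninv.le) p) hp0.ne'] at h2
      rwa [hrhs] at h2
    -- Jensen equality
    set w : Fin n → ℝ := fun _ => (n:ℝ)⁻¹ with hwdef
    have hwsum : ∑ k : Fin n, w k = 1 := by
      rw [hwdef]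
      rw [Finset.sum_const, Finset.card_univ, Fintype.card_fin, nsmul_eq_mul]
      field_simp
    have hmean : ∑ k, w k • mu k = (n:ℝ)⁻¹ := by
      simp only [hwdef, smul_eq_mul, ← Finset.mul_sum, hμsum, mul_one]
    have hjen := (convexOn_rpow hp.le).map_sum_le (t := Finset.univ) (w := w) (p := mu)
      (fun k _ => hninv.le) hwsum (fun k _ => hμnn k)
    have hge : ∑ k, w k • (mu k ^ p) ≤ ((n:ℝ)⁻¹) ^ p := by
      simp only [hwdef, smul_eq_mul, ← Finset.mul_sum]
      calc (n:ℝ)⁻¹ * ∑ k, mu k ^ p ≤ (n:ℝ)⁻¹ * ((n:ℝ) * ((n:ℝ)⁻¹) ^ p) :=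
            mul_le_mul_of_nonneg_left hS hninv.le
        _ = ((n:ℝ)⁻¹) ^ p := by
            rw [← mul_assoc, inv_mul_cancel₀ hnR.ne', one_mul]
    have heq : (∑ k, w k • mu k) ^ p = ∑ k, w k • (mu k ^ p) := by
      refine le_antisymm hjen ?_
      rw [hmean]
      exact hge
    have hall := ((strictConvexOn_rpow hp).map_sum_eq_iff (t := Finset.univ)
      (w := w) (p := mu) (fun k _ => hninv) hwsum (fun k _ => hμnn k)).mp heq
    have hμfinal : ∀ k, mu k = (n:ℝ)⁻¹ := by
      intro k
      have := hall k (Finset.mem_univ k)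
      rw [this, hmean]
    exact unital_of_eigs hn Φ hpos hρ0psd hμfinal
end

section
/- Let n ≥ 1 and let Φ : Matrix (Fin n) ℂ →ₗ[ℂ] Matrix (Fin n) ℂ be a positive trace-preserving linear map. Then Φ is unital (Φ 1 = 1) if and only if for every density matrix ρ, the largest eigenvalue of Φ ρ is at most the largest eigenvalue of ρ; equivalently, Φ does not decrease the entropy N_∞(ρ) = 1 − max_k λ_k(ρ). -/
open scoped Matrix ComplexOrder

open Matrix

open Matrix

lemma herm_sub_psd_iff {n : ℕ} {A : Matrix (Fin n) (Fin n) ℂ} (hA : A.IsHermitian) (t : ℝ) :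
    ((t : ℂ) • (1 : Matrix (Fin n) (Fin n) ℂ) - A).PosSemidef ↔ ∀ i, hA.eigenvalues i ≤ t := by
  set U : Matrix (Fin n) (Fin n) ℂ := ↑hA.eigenvectorUnitary with hUdef
  set D : Matrix (Fin n) (Fin n) ℂ := diagonal (fun i => ((t - hA.eigenvalues i : ℝ) : ℂ)) with hDdef
  have hU1 : star U * U = 1 := Unitary.coe_star_mul_self hA.eigenvectorUnitary
  have hU2 : U * star U = 1 := Unitary.coe_mul_star_self hA.eigenvectorUnitary
  have hd : D = (t:ℂ) • 1 - diagonal (RCLike.ofReal ∘ hA.eigenvalues) := by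
    ext i j
    by_cases h : i = j <;> simp [hDdef, diagonal_apply, Matrix.one_apply, h]
  have key : (t : ℂ) • 1 - A = U * D * star U := by
    rw [hd, Matrix.mul_sub, Matrix.sub_mul]
    congr 1
    · rw [Matrix.mul_smul, Matrix.mul_one, Matrix.smul_mul, hU2]
    · simp only [hUdef]
      exact hA.spectral_theorem
  constructor
  · intro h i
    have h2 := h.conjTranspose_mul_mul_same U
    have h3 : Uᴴ * ((t : ℂ) • 1 - A) * U = D := by
      rw [key, ← Matrix.star_eq_conjTranspose]
      simp only [mul_assoc]
      rw [hU1, mul_one, ← mul_assoc, hU1, one_mul]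
    rw [h3] at h2
    have := (posSemidef_diagonal_iff.mp h2) i
    have := Complex.zero_le_real.mp this
    linarith
  · intro h
    rw [key, Matrix.star_eq_conjTranspose]
    exact (posSemidef_diagonal_iff.mpr fun i =>
      Complex.zero_le_real.mpr (by linarith [h i])).mul_mul_conjTranspose_same U

lemma herm_trace_eq {n : ℕ} {A : Matrix (Fin n) (Fin n) ℂ} (hA : A.IsHermitian) :
    A.trace = ∑ i, (hA.eigenvalues i : ℂ) := by
  have hU1 : star (hA.eigenvectorUnitary : Matrix (Fin n) (Fin n) ℂ) * hA.eigenvectorUnitary = 1 :=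
    Unitary.coe_star_mul_self hA.eigenvectorUnitary
  conv_lhs => rw [hA.spectral_theorem, Unitary.conjStarAlgAut_apply]
  rw [Matrix.trace_mul_cycle, hU1, one_mul, Matrix.trace_diagonal]
  rfl

lemma herm_eq_smul_one {n : ℕ} {A : Matrix (Fin n) (Fin n) ℂ} (hA : A.IsHermitian) (c : ℝ)
    (h : ∀ i, hA.eigenvalues i = c) : A = (c : ℂ) • 1 := by
  have hU2 : (hA.eigenvectorUnitary : Matrix (Fin n) (Fin n) ℂ) *
      star (hA.eigenvectorUnitary : Matrix (Fin n) (Fin n) ℂ) = 1 := by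
    exact Unitary.coe_mul_star_self hA.eigenvectorUnitary
  have hd : diagonal (RCLike.ofReal ∘ hA.eigenvalues) = (c : ℂ) • (1 : Matrix (Fin n) (Fin n) ℂ) := by
    ext i j
    by_cases hij : i = j <;> simp [diagonal_apply, Matrix.one_apply, hij, h]
  rw [hA.spectral_theorem, Unitary.conjStarAlgAut_apply, hd, mul_smul_comm, mul_one, smul_mul_assoc, hU2]

lemma all_eq_of_sum_eq {n : ℕ} (f : Fin n → ℝ) (c : ℝ) (hle : ∀ i, f i ≤ c)
    (hsum : ∑ i, f i = n * c) : ∀ i, f i = c := by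
  by_contra hcon
  push_neg at hcon
  obtain ⟨j, hj⟩ := hcon
  have hjlt : f j < c := lt_of_le_of_ne (hle j) hj
  have hlt : ∑ i, f i < ∑ _i : Fin n, c :=
    Finset.sum_lt_sum (fun i _ => hle i) ⟨j, Finset.mem_univ j, hjlt⟩
  rw [Finset.sum_const, Finset.card_fin, nsmul_eq_mul] at hlt
  linarith

/-- A positive trace-preserving linear map `Φ` is unital iff for every
density matrix `ρ` the largest eigenvalue of `Φ ρ` is at most the largest eigenvalue
of `ρ` (equivalently, `Φ` does not decrease `N_∞(ρ) = 1 - max_k λ_k(ρ)`). -/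
theorem unital_iff_max_eigenvalue_nonincreasing {n : ℕ} (hn : 1 ≤ n)
    (Φ : Matrix (Fin n) (Fin n) ℂ →ₗ[ℂ] Matrix (Fin n) (Fin n) ℂ)
    (hpos : IsPositiveMap Φ) (htp : IsTracePreserving Φ) :
    Φ 1 = 1 ↔
      ∀ ρ : Matrix (Fin n) (Fin n) ℂ, IsDensityMatrix ρ →
        (⨆ k, eigs (Φ ρ) k) ≤ ⨆ k, eigs ρ k := by
  have hne : Nonempty (Fin n) := ⟨⟨0, hn⟩⟩
  have hbdd : ∀ f : Fin n → ℝ, BddAbove (Set.range f) :=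
    fun f => Set.Finite.bddAbove (Set.finite_range f)
  have hn0 : (n : ℝ) ≠ 0 := Nat.cast_ne_zero.mpr (by omega)
  have hn0' : (n : ℂ) ≠ 0 := Nat.cast_ne_zero.mpr (by omega)
  constructor
  · intro hu ρ hρ
    obtain ⟨hpsd, htr⟩ := hρ
    have hherm := hpsd.1
    set t := ⨆ k, eigs ρ k with ht
    have heigs : eigs ρ = hherm.eigenvalues := dif_pos hherm
    have hle : ∀ i, hherm.eigenvalues i ≤ t := fun i => by
      rw [← heigs]; exact le_ciSup (hbdd _) i
    have h1 : ((t : ℂ) • 1 - ρ).PosSemidef := (herm_sub_psd_iff hherm t).mpr hle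
    have h2 := hpos _ h1
    have h3 : Φ ((t : ℂ) • 1 - ρ) = (t : ℂ) • 1 - Φ ρ := by
      rw [_root_.map_sub, _root_.map_smul, hu]
    rw [h3] at h2
    have hΦherm := (hpos ρ hpsd).1
    have h4 := (herm_sub_psd_iff hΦherm t).mp h2
    have heigs2 : eigs (Φ ρ) = hΦherm.eigenvalues := dif_pos hΦherm
    exact ciSup_le fun k => by rw [heigs2]; exact h4 k
  · intro hmono
    set ρ₀ : Matrix (Fin n) (Fin n) ℂ := ((n : ℂ)⁻¹) • 1 with hρ₀
    have hcast : (((n : ℝ)⁻¹ : ℝ) : ℂ) = (n : ℂ)⁻¹ := by push_cast; ring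
    have hρ₀diag : ρ₀ = Matrix.diagonal (fun _ => (n : ℂ)⁻¹) := by
      ext i j
      by_cases h : i = j <;> simp [hρ₀, Matrix.one_apply, Matrix.diagonal_apply, h]
    have hρ₀psd : ρ₀.PosSemidef := by
      rw [hρ₀diag]
      refine Matrix.posSemidef_diagonal_iff.mpr fun i => ?_
      rw [← hcast]
      exact Complex.zero_le_real.mpr (by positivity)
    have htrρ₀ : ρ₀.trace = 1 := by
      rw [hρ₀, Matrix.trace_smul, Matrix.trace_one]
      simp [hn0']
    have hρ₀herm := hρ₀psd.1
    have hle : ∀ i, hρ₀herm.eigenvalues i ≤ (n : ℝ)⁻¹ := by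
      apply (herm_sub_psd_iff hρ₀herm ((n : ℝ)⁻¹)).mp
      have hz : (((n : ℝ)⁻¹ : ℝ) : ℂ) • (1 : Matrix (Fin n) (Fin n) ℂ) - ρ₀ = 0 := by
        rw [hρ₀, hcast, sub_self]
      rw [hz]
      exact Matrix.PosSemidef.zero
    have hsum : ∑ i, hρ₀herm.eigenvalues i = 1 := by
      have h := herm_trace_eq hρ₀herm
      rw [htrρ₀] at h
      exact_mod_cast h.symm
    have heq : ∀ i, hρ₀herm.eigenvalues i = (n : ℝ)⁻¹ :=
      all_eq_of_sum_eq _ _ hle (by rw [hsum]; field_simp)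
    have hsupρ₀ : (⨆ k, eigs ρ₀ k) = (n : ℝ)⁻¹ := by
      have heigs : eigs ρ₀ = hρ₀herm.eigenvalues := dif_pos hρ₀herm
      rw [heigs]
      simp only [heq]
      exact ciSup_const
    have hσpsd := hpos _ hρ₀psd
    have hσtr : (Φ ρ₀).trace = 1 := by rw [htp, htrρ₀]
    have hmono' := hmono ρ₀ ⟨hρ₀psd, htrρ₀⟩
    rw [hsupρ₀] at hmono'
    have hσherm := hσpsd.1
    have heigsσ : eigs (Φ ρ₀) = hσherm.eigenvalues := dif_pos hσherm
    have hleσ : ∀ i, hσherm.eigenvalues i ≤ (n : ℝ)⁻¹ := fun i =>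
      le_trans (by rw [← heigsσ]; exact le_ciSup (hbdd _) i) hmono'
    have hsumσ : ∑ i, hσherm.eigenvalues i = 1 := by
      have h := herm_trace_eq hσherm
      rw [hσtr] at h
      exact_mod_cast h.symm
    have heqσ : ∀ i, hσherm.eigenvalues i = (n : ℝ)⁻¹ :=
      all_eq_of_sum_eq _ _ hleσ (by rw [hsumσ]; field_simp)
    have hσ : Φ ρ₀ = (((n : ℝ)⁻¹ : ℝ) : ℂ) • 1 := herm_eq_smul_one hσherm _ heqσ
    have hone : (1 : Matrix (Fin n) (Fin n) ℂ) = (n : ℂ) • ρ₀ := by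
      rw [hρ₀, smul_smul, mul_inv_cancel₀ hn0', one_smul]
    have hstep : Φ 1 = (n : ℂ) • Φ ρ₀ := by
      conv_lhs => rw [hone, _root_.map_smul]
    rw [hstep, hσ, smul_smul, hcast, mul_inv_cancel₀ hn0', one_smul]
end

section
/- Let n ≥ 1 and let L : Matrix (Fin n) ℂ →ₗ[ℂ] Matrix (Fin n) ℂ be a linear map such that for every t ≥ 0 the map T_t = exp(t • L) is positive and trace-preserving. Then the following are equivalent: (1) T_t 1 = 1 for all t ≥ 0; (2) for every t ≥ 0 and every density matrix ρ, the eigenvalue vector of T_t ρ is majorized by that of ρ (for each k, the sum of the k largest eigenvalues of T_t ρ is at most the sum of the k largest eigenvalues of ρ); (3) S(T_t ρ) ≥ S(ρ) for every t ≥ 0 and every density matrix ρ, where S is the von Neumann entropy; (4) L 1 = 0. -/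
open scoped Matrix ComplexOrder
open scoped Nat

/-- The exponential of an endomorphism of the finite-dimensional space of matrices,
computed via the exponential of its matrix representation in the standard basis. -/
noncomputable def expEnd {n : ℕ}
    (L : Matrix (Fin n) (Fin n) ℂ →ₗ[ℂ] Matrix (Fin n) (Fin n) ℂ) :
    Matrix (Fin n) (Fin n) ℂ →ₗ[ℂ] Matrix (Fin n) (Fin n) ℂ :=
  Matrix.toLin (Matrix.stdBasis ℂ (Fin n) (Fin n)) (Matrix.stdBasis ℂ (Fin n) (Fin n))
    (NormedSpace.exp
      (LinearMap.toMatrix (Matrix.stdBasis ℂ (Fin n) (Fin n))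
        (Matrix.stdBasis ℂ (Fin n) (Fin n)) L))


namespace QAux

open Matrix

variable {n : ℕ}

lemma vnEntropy_eq (A : Matrix (Fin n) (Fin n) ℂ) :
    vnEntropy A = ∑ k, Real.negMulLog (eigs A k) := by
  rw [vnEntropy, ← Finset.sum_neg_distrib]
  exact Finset.sum_congr rfl fun k _ => by simp [Real.negMulLog, neg_mul]


lemma nonempty_cardsubsets {k : ℕ} (hkn : k ≤ n) :
    Nonempty {s : Finset (Fin n) // s.card = k} := by
  obtain ⟨t, -, ht⟩ := Finset.exists_subset_card_eq (s := (Finset.univ : Finset (Fin n))) (n := k)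
    (by simpa using hkn)
  exact ⟨⟨t, ht⟩⟩

lemma sum_le_kMaxSum (v : Fin n → ℝ) {s : Finset (Fin n)} {k : ℕ} (hs : s.card = k) :
    ∑ i ∈ s, v i ≤ kMaxSum v k := by
  unfold kMaxSum
  exact le_ciSup (f := fun s : {s : Finset (Fin n) // s.card = k} => ∑ i ∈ s.1, v i)
    (Set.Finite.bddAbove (Set.finite_range _)) ⟨s, hs⟩

lemma kMaxSum_le {v : Fin n → ℝ} {k : ℕ} (hne : Nonempty {s : Finset (Fin n) // s.card = k})
    {c : ℝ} (h : ∀ s : Finset (Fin n), s.card = k → ∑ i ∈ s, v i ≤ c) : kMaxSum v k ≤ c := by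
  unfold kMaxSum
  exact ciSup_le fun s => h s.1 s.2

lemma dot_le_kMaxSum (lam : Fin n → ℝ) {c : Fin n → ℝ} {k : ℕ} (hk1 : 1 ≤ k) (hkn : k ≤ n)
    (hc0 : ∀ j, 0 ≤ c j) (hc1 : ∀ j, c j ≤ 1) (hcs : ∑ j, c j = (k : ℝ)) :
    ∑ j, c j * lam j ≤ kMaxSum lam k := by
  haveI hne := nonempty_cardsubsets (n := n) hkn
  obtain ⟨t, ht⟩ := Finite.exists_max
    (fun s : {s : Finset (Fin n) // s.card = k} => ∑ i ∈ s.1, lam i)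
  have htcard : t.1.card = k := t.2
  have htne : t.1.Nonempty := Finset.card_pos.mp (by omega)
  obtain ⟨i₀, hi₀t, hi₀min⟩ := Finset.exists_min_image t.1 lam htne
  have hout : ∀ j, j ∉ t.1 → lam j ≤ lam i₀ := by
    intro j hj
    by_contra hlt
    push_neg at hlt
    have hins : j ∉ t.1.erase i₀ := fun h => hj (Finset.mem_of_mem_erase h)
    have hcard' : (insert j (t.1.erase i₀)).card = k := by
      rw [Finset.card_insert_of_notMem hins, Finset.card_erase_of_mem hi₀t, htcard]
      omega
    have h5 := ht ⟨insert j (t.1.erase i₀), hcard'⟩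
    simp only at h5
    rw [Finset.sum_insert hins, Finset.sum_erase_eq_sub hi₀t] at h5
    linarith
  have h1 : ∑ j ∈ t.1ᶜ, c j * lam j ≤ ∑ j ∈ t.1ᶜ, c j * lam i₀ :=
    Finset.sum_le_sum fun j hj =>
      mul_le_mul_of_nonneg_left (hout j (by simpa using hj)) (hc0 j)
  have hcompl : ∑ j ∈ t.1ᶜ, c j = ∑ j ∈ t.1, (1 - c j) := by
    have h2 : ∑ j ∈ t.1, c j + ∑ j ∈ t.1ᶜ, c j = (k : ℝ) := by
      rw [Finset.sum_add_sum_compl]; exact hcs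
    have h3 : ∑ j ∈ t.1, (1 - c j) = (k : ℝ) - ∑ j ∈ t.1, c j := by
      rw [Finset.sum_sub_distrib, Finset.sum_const, htcard]
      simp [nsmul_eq_mul]
    linarith
  calc ∑ j, c j * lam j
      = ∑ j ∈ t.1, c j * lam j + ∑ j ∈ t.1ᶜ, c j * lam j :=
        (Finset.sum_add_sum_compl t.1 _).symm
    _ ≤ ∑ j ∈ t.1, c j * lam j + (∑ j ∈ t.1ᶜ, c j) * lam i₀ := by
        rw [Finset.sum_mul]; exact add_le_add_right h1 _
    _ = ∑ j ∈ t.1, (c j * lam j + (1 - c j) * lam i₀) := by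
        rw [hcompl, Finset.sum_add_distrib, Finset.sum_mul]
    _ ≤ ∑ j ∈ t.1, lam j := by
        refine Finset.sum_le_sum fun j hj => ?_
        have h4 := hi₀min j hj
        have h5 := hc1 j
        nlinarith [mul_nonneg (by linarith : (0:ℝ) ≤ 1 - c j)
          (by linarith : (0:ℝ) ≤ lam j - lam i₀)]
    _ ≤ kMaxSum lam k := sum_le_kMaxSum lam htcard

lemma sum_negMulLog_le {B : Fin n → Fin n → ℝ} (lam : Fin n → ℝ)
    (hB0 : ∀ i j, 0 ≤ B i j) (hrow : ∀ i, ∑ j, B i j = 1) (hcol : ∀ j, ∑ i, B i j = 1)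
    (hlam : ∀ j, 0 ≤ lam j) :
    ∑ j, Real.negMulLog (lam j) ≤ ∑ i, Real.negMulLog (∑ j, B i j * lam j) := by
  have hi : ∀ i, ∑ j, B i j * Real.negMulLog (lam j) ≤ Real.negMulLog (∑ j, B i j * lam j) := by
    intro i
    have := Real.concaveOn_negMulLog.le_map_sum (t := Finset.univ) (w := B i) (p := lam)
      (fun j _ => hB0 i j) (hrow i) (fun j _ => hlam j)
    simpa [smul_eq_mul] using this
  calc ∑ j, Real.negMulLog (lam j)
      = ∑ j, (∑ i, B i j) * Real.negMulLog (lam j) := by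
        refine Finset.sum_congr rfl fun j _ => ?_
        rw [hcol j, one_mul]
    _ = ∑ i, ∑ j, B i j * Real.negMulLog (lam j) := by
        simp_rw [Finset.sum_mul]
        exact Finset.sum_comm
    _ ≤ ∑ i, Real.negMulLog (∑ j, B i j * lam j) := Finset.sum_le_sum fun i _ => hi i

lemma negMulLog_lt_lin {a x : ℝ} (ha : 0 < a) (hx : 0 ≤ x) (hne : x ≠ a) :
    Real.negMulLog x < -Real.log a * x - x + a := by
  rcases eq_or_lt_of_le hx with h0 | h0
  · rw [← h0]
    simpa using ha
  · have hax : a / x ≠ 1 := by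
      intro h
      exact hne ((div_eq_one_iff_eq (ne_of_gt h0)).mp h).symm
    have hlog := Real.log_lt_sub_one_of_pos (div_pos ha h0) hax
    rw [Real.log_div (ne_of_gt ha) (ne_of_gt h0)] at hlog
    have hmul := mul_lt_mul_of_pos_left hlog h0
    have hxx : x * (a / x - 1) = a - x := by field_simp
    rw [Real.negMulLog]
    nlinarith

lemma negMulLog_le_lin {a x : ℝ} (ha : 0 < a) (hx : 0 ≤ x) :
    Real.negMulLog x ≤ -Real.log a * x - x + a := by
  rcases eq_or_ne x a with rfl | hne
  · rw [Real.negMulLog]; ring_nf; exact le_of_eq (by ring)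
  · exact (negMulLog_lt_lin ha hx hne).le

lemma eq_uniform_of_entropy {p : Fin n → ℝ} (hn : 1 ≤ n) (hp0 : ∀ i, 0 ≤ p i)
    (hps : ∑ i, p i = 1) (hent : Real.log n ≤ ∑ i, Real.negMulLog (p i)) :
    ∀ i, p i = (n : ℝ)⁻¹ := by
  have hnpos : (0:ℝ) < n := by exact_mod_cast hn
  have ha : (0:ℝ) < (n:ℝ)⁻¹ := by positivity
  by_contra h
  push_neg at h
  obtain ⟨i₀, hi₀⟩ := h
  have hlt : ∑ i, Real.negMulLog (p i) <
      ∑ i : Fin n, (-Real.log (n:ℝ)⁻¹ * p i - p i + (n:ℝ)⁻¹) :=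
    Finset.sum_lt_sum (fun i _ => negMulLog_le_lin ha (hp0 i))
      ⟨i₀, Finset.mem_univ _, negMulLog_lt_lin ha (hp0 i₀) hi₀⟩
  have heval : ∑ i : Fin n, (-Real.log (n:ℝ)⁻¹ * p i - p i + (n:ℝ)⁻¹) = Real.log n := by
    rw [Real.log_inv]
    rw [Finset.sum_add_distrib, Finset.sum_sub_distrib, ← Finset.mul_sum, hps, Finset.sum_const]
    simp only [Finset.card_univ, Fintype.card_fin, nsmul_eq_mul]
    rw [mul_inv_cancel₀ (ne_of_gt hnpos)]
    ring
  rw [heval] at hlt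
  linarith


lemma eigs_of_isHermitian {A : Matrix (Fin n) (Fin n) ℂ} (h : A.IsHermitian) :
    eigs A = h.eigenvalues := by
  rw [eigs, dif_pos h]

lemma sum_eigs_eq_trace_re {A : Matrix (Fin n) (Fin n) ℂ} (h : A.IsHermitian) :
    ∑ i, eigs A i = A.trace.re := by
  rw [eigs_of_isHermitian h]
  have htr : A.trace = ∑ i, (h.eigenvalues i : ℂ) := by
    conv_lhs => rw [h.spectral_theorem, Unitary.conjStarAlgAut_apply]
    rw [Matrix.trace_mul_cycle, Unitary.coe_star_mul_self h.eigenvectorUnitary, Matrix.one_mul,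
      Matrix.trace_diagonal]
    simp
  rw [htr]
  simp [Complex.re_sum]

lemma eigs_smul_one (r : ℝ) :
    eigs ((r : ℂ) • (1 : Matrix (Fin n) (Fin n) ℂ)) = fun _ => r := by
  have hh : ((r : ℂ) • (1 : Matrix (Fin n) (Fin n) ℂ)).IsHermitian := by
    simp [Matrix.IsHermitian, Matrix.conjTranspose_smul, Complex.star_def, Complex.conj_ofReal]
  rw [eigs_of_isHermitian hh]
  funext i
  have hd : (star (hh.eigenvectorUnitary : Matrix (Fin n) (Fin n) ℂ)) *
      ((r : ℂ) • (1 : Matrix (Fin n) (Fin n) ℂ)) *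
      (hh.eigenvectorUnitary : Matrix (Fin n) (Fin n) ℂ) =
      Matrix.diagonal (RCLike.ofReal ∘ hh.eigenvalues) := by
    have := hh.conjStarAlgAut_star_eigenvectorUnitary
    rwa [Unitary.conjStarAlgAut_star_apply] at this
  have h1 : (star (hh.eigenvectorUnitary : Matrix (Fin n) (Fin n) ℂ)) *
      ((r : ℂ) • (1 : Matrix (Fin n) (Fin n) ℂ)) *
      (hh.eigenvectorUnitary : Matrix (Fin n) (Fin n) ℂ) = (r : ℂ) • 1 := by
    rw [Matrix.mul_smul, Matrix.mul_one, Matrix.smul_mul, Unitary.coe_star_mul_self]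
  rw [h1] at hd
  have h2 := congrFun (congrFun hd i) i
  simp only [Matrix.smul_apply, Matrix.one_apply_eq, Matrix.diagonal_apply_eq,
    Function.comp_apply, smul_eq_mul, mul_one] at h2
  simpa using congrArg Complex.re h2.symm

lemma eq_smul_one_of_eigs_const {A : Matrix (Fin n) (Fin n) ℂ} (h : A.IsHermitian) {r : ℝ}
    (he : ∀ i, h.eigenvalues i = r) : A = (r : ℂ) • 1 := by
  have hdiag : Matrix.diagonal (RCLike.ofReal ∘ h.eigenvalues) =
      (r : ℂ) • (1 : Matrix (Fin n) (Fin n) ℂ) := by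
    have hfun : (RCLike.ofReal ∘ h.eigenvalues : Fin n → ℂ) = fun _ => (r : ℂ) :=
      funext fun i => by simp [he i]
    rw [hfun, ← Matrix.smul_one_eq_diagonal]
  conv_lhs => rw [h.spectral_theorem, Unitary.conjStarAlgAut_apply]
  rw [hdiag, Matrix.mul_smul, Matrix.mul_one, Matrix.smul_mul,
    (Matrix.mem_unitaryGroup_iff).mp h.eigenvectorUnitary.2]

lemma quad_eq (U M : Matrix (Fin n) (Fin n) ℂ) (i : Fin n) :
    star (fun a => U a i) ⬝ᵥ M *ᵥ (fun a => U a i) = (star U * M * U) i i := by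
  simp only [dotProduct, Matrix.mulVec, Matrix.mul_apply, Matrix.star_apply,
    Pi.star_apply, dotProduct, Finset.sum_mul, Finset.mul_sum]
  rw [Finset.sum_comm]
  exact Finset.sum_congr rfl fun a _ => Finset.sum_congr rfl fun b _ => by ring

lemma channel_B (Φ : Matrix (Fin n) (Fin n) ℂ →ₗ[ℂ] Matrix (Fin n) (Fin n) ℂ)
    (hpos : IsPositiveMap Φ) (htr : IsTracePreserving Φ) (hone : Φ 1 = 1)
    {ρ : Matrix (Fin n) (Fin n) ℂ} (hρ : ρ.PosSemidef) :
    ∃ B : Fin n → Fin n → ℝ, (∀ i j, 0 ≤ B i j) ∧ (∀ i, ∑ j, B i j = 1) ∧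
      (∀ j, ∑ i, B i j = 1) ∧ ∀ i, eigs (Φ ρ) i = ∑ j, B i j * eigs ρ j := by
  classical
  have hσ : (Φ ρ).PosSemidef := hpos ρ hρ
  have hσh : (Φ ρ).IsHermitian := hσ.1
  have hρh : ρ.IsHermitian := hρ.1
  set V : Matrix (Fin n) (Fin n) ℂ := (hρh.eigenvectorUnitary : Matrix (Fin n) (Fin n) ℂ)
    with hVdef
  set U : Matrix (Fin n) (Fin n) ℂ := (hσh.eigenvectorUnitary : Matrix (Fin n) (Fin n) ℂ)
    with hUdef
  have hVV : V * star V = 1 := (Matrix.mem_unitaryGroup_iff).mp hρh.eigenvectorUnitary.2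
  have hVV' : star V * V = 1 := Unitary.coe_star_mul_self hρh.eigenvectorUnitary
  have hUU : U * star U = 1 := (Matrix.mem_unitaryGroup_iff).mp hσh.eigenvectorUnitary.2
  have hUU' : star U * U = 1 := Unitary.coe_star_mul_self hσh.eigenvectorUnitary
  set lam : Fin n → ℝ := hρh.eigenvalues with hlamdef
  set Q : Fin n → Matrix (Fin n) (Fin n) ℂ :=
    fun j => Matrix.vecMulVec (fun a => V a j) (star fun a => V a j) with hQdef
  have hQpsd : ∀ j, (Q j).PosSemidef := by
    intro j
    rw [hQdef]
    simp only
    rw [Matrix.vecMulVec_eq (Fin 1), ← Matrix.conjTranspose_replicateCol]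
    exact Matrix.posSemidef_self_mul_conjTranspose _
  have hQtr : ∀ j, (Q j).trace = 1 := by
    intro j
    have h1 : (Q j).trace = (star V * V) j j := by
      simp [hQdef, Matrix.trace, Matrix.diag, Matrix.vecMulVec_apply, Matrix.mul_apply,
        Matrix.star_apply, mul_comm]
    rw [h1, hVV', Matrix.one_apply_eq]
  have hQsum : ∑ j, Q j = 1 := by
    rw [← hVV]
    ext a b
    simp [hQdef, Matrix.sum_apply, Matrix.vecMulVec_apply, Matrix.mul_apply, Matrix.star_apply]
  have hρdec : ρ = ∑ j, (lam j : ℂ) • Q j := by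
    ext a b
    conv_lhs => rw [hρh.spectral_theorem, Unitary.conjStarAlgAut_apply, Matrix.mul_assoc]
    rw [Matrix.mul_apply]
    simp only [Matrix.diagonal_mul, Matrix.star_apply, Matrix.sum_apply, Matrix.smul_apply,
      Matrix.vecMulVec_apply, Pi.star_apply, smul_eq_mul, Function.comp_apply, hQdef, hVdef,
      hlamdef]
    exact Finset.sum_congr rfl fun c _ => mul_left_comm _ _ _
  set B : Fin n → Fin n → ℝ := fun i j => ((star U * Φ (Q j) * U) i i).re with hBdef
  have hBnonneg : ∀ i j, 0 ≤ B i j := by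
    intro i j
    have hpsd := hpos (Q j) (hQpsd j)
    have h2 := hpsd.dotProduct_mulVec_nonneg (fun a => U a i)
    rw [quad_eq] at h2
    exact (Complex.le_def.mp h2).1
  have hrow : ∀ i, ∑ j, B i j = 1 := by
    intro i
    have h1 : ∑ j, (star U * Φ (Q j) * U) = star U * Φ (∑ j, Q j) * U := by
      rw [map_sum]
      simp [Finset.sum_mul, Finset.mul_sum, Matrix.mul_sum, Matrix.sum_mul]
    have h2 : ∑ j, ((star U * Φ (Q j) * U) i i) = (1 : ℂ) := by
      rw [← Matrix.sum_apply i i Finset.univ (fun j => star U * Φ (Q j) * U), h1, hQsum, hone,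
        Matrix.mul_one, hUU', Matrix.one_apply_eq]
    have h3 : (∑ j, ((star U * Φ (Q j) * U) i i)).re = 1 := by rw [h2]; simp
    rw [← h3, Complex.re_sum]
  have hcol : ∀ j, ∑ i, B i j = 1 := by
    intro j
    have h1 : ∑ i, ((star U * Φ (Q j) * U) i i) = (star U * Φ (Q j) * U).trace := rfl
    have h2 : (star U * Φ (Q j) * U).trace = (1 : ℂ) := by
      rw [Matrix.trace_mul_cycle, hUU, Matrix.one_mul, htr (Q j), hQtr j]
    have h3 : (∑ i, ((star U * Φ (Q j) * U) i i)).re = 1 := by rw [h1, h2]; simp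
    rw [← h3, Complex.re_sum]
  refine ⟨B, hBnonneg, hrow, hcol, ?_⟩
  intro i
  have hu : (fun a => U a i) = ⇑(hσh.eigenvectorBasis i) := by
    funext a
    rw [hUdef]
    exact hσh.eigenvectorUnitary_apply a i
  have h0 : eigs (Φ ρ) i = ((star U * (Φ ρ) * U) i i).re := by
    rw [eigs_of_isHermitian hσh, hσh.eigenvalues_eq i, ← quad_eq, hu]
    rfl
  have hσdec : Φ ρ = ∑ j, (lam j : ℂ) • Φ (Q j) := by
    conv_lhs => rw [hρdec]
    rw [map_sum]
    exact Finset.sum_congr rfl fun j _ => Φ.map_smul _ _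
  have h4 : star U * (Φ ρ) * U = ∑ j, (lam j : ℂ) • (star U * Φ (Q j) * U) := by
    rw [hσdec]
    simp [Matrix.mul_sum, Matrix.sum_mul, Matrix.mul_smul, Matrix.smul_mul]
  rw [h0, h4]
  rw [Matrix.sum_apply, Complex.re_sum]
  rw [eigs_of_isHermitian hρh]
  refine Finset.sum_congr rfl fun j _ => ?_
  rw [Matrix.smul_apply, smul_eq_mul, Complex.mul_re, Complex.ofReal_re, Complex.ofReal_im]
  simp only [hBdef]
  ring


end QAux

set_option maxHeartbeats 2000000 in
/-- For a generator `L` whose semigroup `exp(t • L)` consists of positive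
trace-preserving maps, the following are equivalent: (1) the semigroup is unital;
(2) eigenvalue majorization `exp(t • L) ρ ≺ ρ` for all density matrices and `t ≥ 0`;
(3) the von Neumann entropy is not decreased; (4) `L 1 = 0`. -/
theorem tfae_unital_majorization_entropy_generator {n : ℕ} (hn : 1 ≤ n)
    (L : Matrix (Fin n) (Fin n) ℂ →ₗ[ℂ] Matrix (Fin n) (Fin n) ℂ)
    (hptp : ∀ t : ℝ, 0 ≤ t →
      IsPositiveMap (expEnd (t • L)) ∧ IsTracePreserving (expEnd (t • L))) :
    List.TFAE
      [∀ t : ℝ, 0 ≤ t → expEnd (t • L) 1 = 1,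
       ∀ t : ℝ, 0 ≤ t → ∀ ρ : Matrix (Fin n) (Fin n) ℂ, IsDensityMatrix ρ →
         ∀ k : ℕ, 1 ≤ k → k ≤ n →
           kMaxSum (eigs (expEnd (t • L) ρ)) k ≤ kMaxSum (eigs ρ) k,
       ∀ t : ℝ, 0 ≤ t → ∀ ρ : Matrix (Fin n) (Fin n) ℂ, IsDensityMatrix ρ →
         vnEntropy ρ ≤ vnEntropy (expEnd (t • L) ρ),
       L 1 = 0] := by
  classical
  letI : SeminormedRing (Matrix (Fin n × Fin n) (Fin n × Fin n) ℂ) :=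
    Matrix.linftyOpSemiNormedRing
  letI : NormedRing (Matrix (Fin n × Fin n) (Fin n × Fin n) ℂ) := Matrix.linftyOpNormedRing
  letI : NormedAlgebra ℂ (Matrix (Fin n × Fin n) (Fin n × Fin n) ℂ) :=
    Matrix.linftyOpNormedAlgebra
  haveI : CompleteSpace (Matrix (Fin n × Fin n) (Fin n × Fin n) ℂ) :=
    FiniteDimensional.complete ℂ _
  set b := Matrix.stdBasis ℂ (Fin n) (Fin n) with hbdef
  set A := LinearMap.toMatrix b b L with hAdef
  set x₀ : (Fin n × Fin n) → ℂ := ⇑(b.repr 1) with hx₀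
  obtain ⟨Φev, hΦevapp⟩ : ∃ Φev : Matrix (Fin n × Fin n) (Fin n × Fin n) ℂ →L[ℂ]
      ((Fin n × Fin n) → ℂ), ∀ M, Φev M = M *ᵥ x₀ :=
    ⟨LinearMap.toContinuousLinearMap
      { toFun := fun M => M *ᵥ x₀
        map_add' := fun M N => Matrix.add_mulVec M N x₀
        map_smul' := fun c M => Matrix.smul_mulVec c M x₀ }, fun M => rfl⟩
  have hsmul : ∀ t : ℝ, t • L = (t : ℂ) • L := by
    intro t
    apply LinearMap.ext
    intro M
    show t • L M = (t : ℂ) • L M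
    ext i j
    simp [Matrix.smul_apply, Complex.real_smul]
  have htoM : ∀ t : ℝ, LinearMap.toMatrix b b (expEnd (t • L))
      = NormedSpace.exp ((t : ℂ) • A) := by
    intro t
    rw [expEnd, LinearMap.toMatrix_toLin, hsmul t, map_smul, hAdef]
  have hvec : ∀ t : ℝ, (NormedSpace.exp ((t : ℂ) • A)) *ᵥ x₀
      = ⇑(b.repr (expEnd (t • L) 1)) := by
    intro t
    rw [← htoM t]
    exact LinearMap.toMatrix_mulVec_repr b b _ 1
  have hfix_iff : ∀ t : ℝ, expEnd (t • L) 1 = 1 ↔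
      (NormedSpace.exp ((t : ℂ) • A)) *ᵥ x₀ = x₀ := by
    intro t
    rw [hvec t, hx₀]
    constructor
    · intro h; rw [h]
    · intro h
      exact b.repr.injective (DFunLike.coe_injective h)
  have hL1vec : (A : Matrix (Fin n × Fin n) (Fin n × Fin n) ℂ) *ᵥ x₀ = ⇑(b.repr (L 1)) :=
    LinearMap.toMatrix_mulVec_repr b b L 1
  have hL1_iff : L 1 = 0 ↔ A *ᵥ x₀ = 0 := by
    rw [hL1vec]
    constructor
    · intro h; rw [h]; simp
    · intro h
      have h2 : b.repr (L 1) = 0 := DFunLike.coe_injective (by simpa using h)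
      exact (LinearEquiv.map_eq_zero_iff b.repr).mp h2
  -- (4) → (1)
  have h41 : L 1 = 0 → ∀ t : ℝ, 0 ≤ t → expEnd (t • L) 1 = 1 := by
    intro hL t ht
    rw [hfix_iff t]
    have hker : A *ᵥ x₀ = 0 := hL1_iff.mp hL
    have hsummable : Summable (fun m : ℕ => (m !⁻¹ : ℂ) • ((t : ℂ) • A) ^ m) :=
      NormedSpace.expSeries_summable' ((t : ℂ) • A)
    rw [NormedSpace.exp_eq_tsum (𝕂 := ℂ)]
    have hΦeveq : (∑' m : ℕ, (m !⁻¹ : ℂ) • ((t : ℂ) • A) ^ m) *ᵥ x₀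
        = ∑' m : ℕ, (m !⁻¹ : ℂ) • (((t : ℂ) • A) ^ m *ᵥ x₀) := by
      have hmt := Φev.map_tsum hsummable
      simpa [hΦevapp, Matrix.smul_mulVec] using hmt
    rw [hΦeveq]
    have hterm : ∀ m : ℕ, m ≠ 0 → (m !⁻¹ : ℂ) • (((t : ℂ) • A) ^ m *ᵥ x₀) = 0 := by
      intro m hm
      obtain ⟨k, rfl⟩ := Nat.exists_eq_succ_of_ne_zero hm
      rw [pow_succ, ← Matrix.mulVec_mulVec, Matrix.smul_mulVec, hker, smul_zero,
        Matrix.mulVec_zero, smul_zero]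
    rw [tsum_eq_single 0 hterm]
    simp [Matrix.one_mulVec]
  -- (1) → (4)
  have h14 : (∀ t : ℝ, 0 ≤ t → expEnd (t • L) 1 = 1) → L 1 = 0 := by
    intro h1
    rw [hL1_iff]
    have hfix : ∀ t : ℝ, 0 ≤ t → NormedSpace.exp ((t : ℂ) • A) *ᵥ x₀ = x₀ :=
      fun t ht => (hfix_iff t).mp (h1 t ht)
    have hd : HasDerivAt (fun z : ℂ => NormedSpace.exp (z • A))
        (A * NormedSpace.exp (((1 : ℝ) : ℂ) • A)) (((1 : ℝ) : ℂ)) :=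
      hasDerivAt_exp_smul_const' A (((1 : ℝ) : ℂ))
    have hdΦev : HasDerivAt (fun z : ℂ => Φev (NormedSpace.exp (z • A)))
        (Φev (A * NormedSpace.exp (((1 : ℝ) : ℂ) • A))) (((1 : ℝ) : ℂ)) :=
      HasFDerivAt.comp_hasDerivAt _ Φev.hasFDerivAt hd
    have hofReal : HasDerivAt (fun s : ℝ => (s : ℂ)) 1 1 := by
      simpa using (hasDerivAt_id (1 : ℝ)).ofReal_comp
    have hF : HasDerivAt (fun s : ℝ => Φev (NormedSpace.exp ((s : ℂ) • A)))
        (Φev (A * NormedSpace.exp (((1 : ℝ) : ℂ) • A))) 1 := by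
      have := HasDerivAt.scomp (1 : ℝ) hdΦev hofReal
      simpa [Function.comp_def] using this
    have hconst : (fun s : ℝ => Φev (NormedSpace.exp ((s : ℂ) • A))) =ᶠ[nhds (1 : ℝ)]
        fun _ => x₀ := by
      filter_upwards [Ioi_mem_nhds (by norm_num : (0 : ℝ) < 1)] with s hs
      rw [hΦevapp, hfix s (le_of_lt hs)]
    have hF0 : HasDerivAt (fun s : ℝ => Φev (NormedSpace.exp ((s : ℂ) • A))) 0 1 :=
      hconst.hasDerivAt_iff.mpr (hasDerivAt_const (1 : ℝ) x₀)
    have h0 : Φev (A * NormedSpace.exp (((1 : ℝ) : ℂ) • A)) = 0 := hF.unique hF0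
    rw [hΦevapp, ← Matrix.mulVec_mulVec, hfix 1 zero_le_one] at h0
    exact h0
  -- the uniform density matrix
  have hnR : (0 : ℝ) < n := by exact_mod_cast hn
  set c : ℝ := (n : ℝ)⁻¹ with hc
  have hcpos : 0 < c := by positivity
  set ρ₀ : Matrix (Fin n) (Fin n) ℂ := ((c : ℝ) : ℂ) • 1 with hρ₀
  have hρ₀density : IsDensityMatrix ρ₀ := by
    constructor
    · rw [hρ₀, Matrix.smul_one_eq_diagonal]
      exact Matrix.PosSemidef.diagonal fun i => Complex.zero_le_real.mpr hcpos.le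
    · rw [hρ₀, Matrix.trace_smul, Matrix.trace_one, Fintype.card_fin, smul_eq_mul]
      rw [hc]
      push_cast
      field_simp
  have hflat : eigs ρ₀ = fun _ => c := by rw [hρ₀]; exact QAux.eigs_smul_one c
  have hconc : ∀ t : ℝ, 0 ≤ t → (∀ i, eigs (expEnd (t • L) ρ₀) i = c) →
      expEnd (t • L) 1 = 1 := by
    intro t ht he
    have hσpsd : (expEnd (t • L) ρ₀).PosSemidef := (hptp t ht).1 ρ₀ hρ₀density.1
    have hσ1 : expEnd (t • L) ρ₀ = ρ₀ := by
      rw [hρ₀]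
      refine QAux.eq_smul_one_of_eigs_const hσpsd.1 (r := c) ?_
      intro i
      have heigs := QAux.eigs_of_isHermitian hσpsd.1
      rw [← heigs]
      exact he i
    have hcne : ((c : ℝ) : ℂ) ≠ 0 := by
      exact_mod_cast ne_of_gt hcpos
    calc expEnd (t • L) 1 = expEnd (t • L) (((c : ℝ) : ℂ)⁻¹ • ρ₀) := by
          rw [hρ₀, smul_smul, inv_mul_cancel₀ hcne, one_smul]
      _ = ((c : ℝ) : ℂ)⁻¹ • expEnd (t • L) ρ₀ := map_smul _ _ _
      _ = 1 := by rw [hσ1, hρ₀, smul_smul, inv_mul_cancel₀ hcne, one_smul]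
  -- (1) → (2)
  have h12 : (∀ t : ℝ, 0 ≤ t → expEnd (t • L) 1 = 1) →
      ∀ t : ℝ, 0 ≤ t → ∀ ρ : Matrix (Fin n) (Fin n) ℂ, IsDensityMatrix ρ →
        ∀ k : ℕ, 1 ≤ k → k ≤ n →
          kMaxSum (eigs (expEnd (t • L) ρ)) k ≤ kMaxSum (eigs ρ) k := by
    intro h1 t ht ρ hρ k hk1 hkn
    obtain ⟨B, hB0, hrow, hcol, hmu⟩ := QAux.channel_B (expEnd (t • L)) (hptp t ht).1
      (hptp t ht).2 (h1 t ht) hρ.1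
    refine QAux.kMaxSum_le (QAux.nonempty_cardsubsets hkn) ?_
    intro s hs
    have hswap : ∑ i ∈ s, eigs (expEnd (t • L) ρ) i
        = ∑ j, (∑ i ∈ s, B i j) * eigs ρ j := by
      calc ∑ i ∈ s, eigs (expEnd (t • L) ρ) i = ∑ i ∈ s, ∑ j, B i j * eigs ρ j :=
            Finset.sum_congr rfl fun i _ => hmu i
        _ = ∑ j, ∑ i ∈ s, B i j * eigs ρ j := Finset.sum_comm
        _ = ∑ j, (∑ i ∈ s, B i j) * eigs ρ j := by
            exact Finset.sum_congr rfl fun j _ => (Finset.sum_mul _ _ _).symm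
    rw [hswap]
    refine QAux.dot_le_kMaxSum (eigs ρ) hk1 hkn ?_ ?_ ?_
    · intro j
      exact Finset.sum_nonneg fun i _ => hB0 i j
    · intro j
      calc ∑ i ∈ s, B i j ≤ ∑ i, B i j :=
            Finset.sum_le_sum_of_subset_of_nonneg (Finset.subset_univ s)
              fun i _ _ => hB0 i j
        _ = 1 := hcol j
    · calc ∑ j, ∑ i ∈ s, B i j = ∑ i ∈ s, ∑ j, B i j := Finset.sum_comm
        _ = ∑ i ∈ s, (1 : ℝ) := Finset.sum_congr rfl fun i _ => hrow i
        _ = (k : ℝ) := by rw [Finset.sum_const, hs]; simp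
  -- (1) → (3)
  have h13 : (∀ t : ℝ, 0 ≤ t → expEnd (t • L) 1 = 1) →
      ∀ t : ℝ, 0 ≤ t → ∀ ρ : Matrix (Fin n) (Fin n) ℂ, IsDensityMatrix ρ →
        vnEntropy ρ ≤ vnEntropy (expEnd (t • L) ρ) := by
    intro h1 t ht ρ hρ
    obtain ⟨B, hB0, hrow, hcol, hmu⟩ := QAux.channel_B (expEnd (t • L)) (hptp t ht).1
      (hptp t ht).2 (h1 t ht) hρ.1
    have hlam0 : ∀ j, 0 ≤ eigs ρ j := by
      intro j
      rw [QAux.eigs_of_isHermitian hρ.1.1]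
      exact hρ.1.eigenvalues_nonneg j
    rw [QAux.vnEntropy_eq, QAux.vnEntropy_eq]
    calc ∑ j, Real.negMulLog (eigs ρ j)
        ≤ ∑ i, Real.negMulLog (∑ j, B i j * eigs ρ j) :=
          QAux.sum_negMulLog_le (eigs ρ) hB0 hrow hcol hlam0
      _ = ∑ i, Real.negMulLog (eigs (expEnd (t • L) ρ) i) :=
          Finset.sum_congr rfl fun i _ => by rw [hmu i]
  -- (2) → (1)
  have h21 : (∀ t : ℝ, 0 ≤ t → ∀ ρ : Matrix (Fin n) (Fin n) ℂ, IsDensityMatrix ρ →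
      ∀ k : ℕ, 1 ≤ k → k ≤ n →
        kMaxSum (eigs (expEnd (t • L) ρ)) k ≤ kMaxSum (eigs ρ) k) →
      ∀ t : ℝ, 0 ≤ t → expEnd (t • L) 1 = 1 := by
    intro h2 t ht
    have hσpsd : (expEnd (t • L) ρ₀).PosSemidef := (hptp t ht).1 ρ₀ hρ₀density.1
    have htrσ : (expEnd (t • L) ρ₀).trace = 1 := by
      rw [(hptp t ht).2 ρ₀, hρ₀density.2]
    have hsum : ∑ i, eigs (expEnd (t • L) ρ₀) i = 1 := by
      rw [QAux.sum_eigs_eq_trace_re hσpsd.1, htrσ]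
      simp
    have hub : ∀ i, eigs (expEnd (t • L) ρ₀) i ≤ c := by
      intro i
      have h1le := h2 t ht ρ₀ hρ₀density 1 le_rfl hn
      have ha : eigs (expEnd (t • L) ρ₀) i ≤ kMaxSum (eigs (expEnd (t • L) ρ₀)) 1 := by
        have := QAux.sum_le_kMaxSum (eigs (expEnd (t • L) ρ₀)) (Finset.card_singleton i)
        simpa using this
      have hb : kMaxSum (eigs ρ₀) 1 ≤ c := by
        refine QAux.kMaxSum_le (QAux.nonempty_cardsubsets hn) ?_
        intro s hs
        obtain ⟨j, rfl⟩ := Finset.card_eq_one.mp hs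
        simp [hflat]
      exact ha.trans (h1le.trans hb)
    have hlb : ∀ i, c ≤ eigs (expEnd (t • L) ρ₀) i := by
      intro i
      have hcard : (Finset.univ.erase i).card = n - 1 := by
        rw [Finset.card_erase_of_mem (Finset.mem_univ i)]
        simp
      have herase : ∑ j ∈ Finset.univ.erase i, eigs (expEnd (t • L) ρ₀) j
          ≤ ((n - 1 : ℕ) : ℝ) * c := by
        calc ∑ j ∈ Finset.univ.erase i, eigs (expEnd (t • L) ρ₀) j
            ≤ (Finset.univ.erase i).card • c :=
              Finset.sum_le_card_nsmul _ _ c fun j _ => hub j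
          _ = ((n - 1 : ℕ) : ℝ) * c := by rw [hcard, nsmul_eq_mul]
      have hsplit : eigs (expEnd (t • L) ρ₀) i
          + ∑ j ∈ Finset.univ.erase i, eigs (expEnd (t • L) ρ₀) j = 1 := by
        rw [Finset.add_sum_erase _ _ (Finset.mem_univ i)]
        exact hsum
      have hcast : ((n - 1 : ℕ) : ℝ) = (n : ℝ) - 1 := by
        have := Nat.cast_sub (R := ℝ) hn
        simpa using this
      have hcn : (n : ℝ) * c = 1 := by
        rw [hc]
        field_simp
      rw [hcast] at herase
      nlinarith [herase, hsplit, hcn]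
    exact hconc t ht fun i => le_antisymm (hub i) (hlb i)
  -- (3) → (1)
  have h31 : (∀ t : ℝ, 0 ≤ t → ∀ ρ : Matrix (Fin n) (Fin n) ℂ, IsDensityMatrix ρ →
      vnEntropy ρ ≤ vnEntropy (expEnd (t • L) ρ)) →
      ∀ t : ℝ, 0 ≤ t → expEnd (t • L) 1 = 1 := by
    intro h3 t ht
    have hσpsd : (expEnd (t • L) ρ₀).PosSemidef := (hptp t ht).1 ρ₀ hρ₀density.1
    have htrσ : (expEnd (t • L) ρ₀).trace = 1 := by
      rw [(hptp t ht).2 ρ₀, hρ₀density.2]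
    have hsum : ∑ i, eigs (expEnd (t • L) ρ₀) i = 1 := by
      rw [QAux.sum_eigs_eq_trace_re hσpsd.1, htrσ]
      simp
    have hvn0 : vnEntropy ρ₀ = Real.log n := by
      rw [QAux.vnEntropy_eq, hflat]
      rw [Finset.sum_const, Finset.card_univ, Fintype.card_fin, nsmul_eq_mul]
      rw [hc]
      rw [Real.negMulLog, Real.log_inv]
      field_simp
    have hent := h3 t ht ρ₀ hρ₀density
    rw [hvn0, QAux.vnEntropy_eq] at hent
    have hp0 : ∀ i, 0 ≤ eigs (expEnd (t • L) ρ₀) i := by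
      intro i
      rw [QAux.eigs_of_isHermitian hσpsd.1]
      exact hσpsd.eigenvalues_nonneg i
    have huniform := QAux.eq_uniform_of_entropy hn hp0 hsum hent
    exact hconc t ht fun i => (huniform i).trans hc.symm
  tfae_have 1 → 2 := h12
  tfae_have 1 → 3 := h13
  tfae_have 2 → 1 := h21
  tfae_have 3 → 1 := h31
  tfae_have 1 → 4 := h14
  tfae_have 4 → 1 := h41
  tfae_finish
end

section
/- Let n ≥ 1 and let Φ : Matrix (Fin n) ℂ →ₗ[ℂ] Matrix (Fin n) ℂ be a positive trace-preserving linear map. Then Φ is unital (Φ 1 = 1) if and only if Φ does not increase the purity, i.e. trace((Φ ρ)^2) ≤ trace(ρ^2) (as real numbers, these traces being real) for every density matrix ρ. -/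
open scoped Matrix ComplexOrder

namespace PurityAux

open Matrix

variable {n : ℕ}

lemma psd_diag_nonneg {A : Matrix (Fin n) (Fin n) ℂ} (hA : A.PosSemidef) (i : Fin n) :
    0 ≤ A i i := by
  exact hA.diag_nonneg

lemma psd_trace_nonneg {A : Matrix (Fin n) (Fin n) ℂ} (hA : A.PosSemidef) :
    0 ≤ A.trace :=
  Finset.sum_nonneg fun i _ => psd_diag_nonneg hA i

open scoped MatrixOrder in
lemma psd_trace_mul_nonneg {P Q : Matrix (Fin n) (Fin n) ℂ}
    (hP : P.PosSemidef) (hQ : Q.PosSemidef) : 0 ≤ (P * Q).trace := by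
  obtain ⟨B, rfl⟩ := CStarAlgebra.nonneg_iff_eq_star_mul_self.mp hP.nonneg
  rw [← trace_mul_cycle]
  exact psd_trace_nonneg (hQ.mul_mul_conjTranspose_same B)

lemma diag_sum_single (d : Fin n → ℂ) :
    diagonal d = ∑ i, d i • diagonal (Pi.single i 1) := by
  ext a b
  simp only [Finset.sum_apply, Matrix.sum_apply, Matrix.smul_apply, diagonal_apply, smul_eq_mul]
  by_cases h : a = b
  · subst h
    simp [Pi.single_apply]
  · simp [h]

lemma trace_conj_unitary {U B : Matrix (Fin n) (Fin n) ℂ} (hU : star U * U = 1) :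
    (U * B * star U).trace = B.trace := by
  rw [trace_mul_cycle, hU, Matrix.one_mul]

/-- Spectral decomposition as a sum of scaled rank-one PSD pieces. -/
lemma spectral_sum {A : Matrix (Fin n) (Fin n) ℂ} (hA : A.IsHermitian) :
    A = ∑ i, (hA.eigenvalues i : ℂ) •
      ((hA.eigenvectorUnitary : Matrix (Fin n) (Fin n) ℂ) * diagonal (Pi.single i 1) *
        star (hA.eigenvectorUnitary : Matrix (Fin n) (Fin n) ℂ)) := by
  conv_lhs => rw [hA.spectral_theorem, Unitary.conjStarAlgAut_apply]
  have : (diagonal (RCLike.ofReal ∘ hA.eigenvalues) : Matrix (Fin n) (Fin n) ℂ)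
      = ∑ i, (hA.eigenvalues i : ℂ) • diagonal (Pi.single i 1) := by
    rw [← diag_sum_single]
    rfl
  rw [this, Finset.mul_sum, Finset.sum_mul]
  simp only [mul_smul_comm, smul_mul_assoc]

lemma conj_mul_conj {U : Matrix (Fin n) (Fin n) ℂ} (hU : star U * U = 1)
    (B C : Matrix (Fin n) (Fin n) ℂ) :
    (U * B * star U) * (U * C * star U) = U * (B * C) * star U := by
  calc (U * B * star U) * (U * C * star U)
      = U * (B * ((star U * U) * (C * star U))) := by simp only [Matrix.mul_assoc]
    _ = U * (B * (C * star U)) := by rw [hU, Matrix.one_mul]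
    _ = U * (B * C) * star U := by simp only [Matrix.mul_assoc]

lemma sq_eq {A : Matrix (Fin n) (Fin n) ℂ} (hA : A.IsHermitian) :
    A * A = (hA.eigenvectorUnitary : Matrix (Fin n) (Fin n) ℂ) *
      diagonal (fun i => (hA.eigenvalues i : ℂ)^2) *
      star (hA.eigenvectorUnitary : Matrix (Fin n) (Fin n) ℂ) := by
  have hU : star (hA.eigenvectorUnitary : Matrix (Fin n) (Fin n) ℂ) *
      (hA.eigenvectorUnitary : Matrix (Fin n) (Fin n) ℂ) = 1 :=
    mem_unitaryGroup_iff'.mp hA.eigenvectorUnitary.2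
  have hdd : (diagonal (RCLike.ofReal ∘ hA.eigenvalues) : Matrix (Fin n) (Fin n) ℂ) *
      diagonal (RCLike.ofReal ∘ hA.eigenvalues)
      = diagonal (fun i => (hA.eigenvalues i : ℂ)^2) := by
    have hfun : (fun i => (RCLike.ofReal ∘ hA.eigenvalues : Fin n → ℂ) i *
          (RCLike.ofReal ∘ hA.eigenvalues : Fin n → ℂ) i)
        = fun i => (hA.eigenvalues i : ℂ)^2 := by
      funext i
      simp [sq]
    rw [diagonal_mul_diagonal, hfun]
  conv_lhs => rw [hA.spectral_theorem, Unitary.conjStarAlgAut_apply]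
  rw [conj_mul_conj hU, hdd]

lemma trace_sq_re {A : Matrix (Fin n) (Fin n) ℂ} (hA : A.IsHermitian) :
    (Matrix.trace (A * A)).re = ∑ i, (hA.eigenvalues i)^2 := by
  have hU : star (hA.eigenvectorUnitary : Matrix (Fin n) (Fin n) ℂ) *
      (hA.eigenvectorUnitary : Matrix (Fin n) (Fin n) ℂ) = 1 :=
    mem_unitaryGroup_iff'.mp hA.eigenvectorUnitary.2
  rw [sq_eq hA, trace_conj_unitary hU, trace_diagonal, Complex.re_sum]
  refine Finset.sum_congr rfl fun i _ => ?_
  rw [← Complex.ofReal_pow]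
  exact Complex.ofReal_re _

lemma trace_re {A : Matrix (Fin n) (Fin n) ℂ} (hA : A.IsHermitian) :
    (Matrix.trace A).re = ∑ i, hA.eigenvalues i := by
  have hU : star (hA.eigenvectorUnitary : Matrix (Fin n) (Fin n) ℂ) *
      (hA.eigenvectorUnitary : Matrix (Fin n) (Fin n) ℂ) = 1 :=
    mem_unitaryGroup_iff'.mp hA.eigenvectorUnitary.2
  conv_lhs => rw [hA.spectral_theorem, Unitary.conjStarAlgAut_apply]
  rw [trace_conj_unitary hU, trace_diagonal, Complex.re_sum]
  refine Finset.sum_congr rfl fun i _ => ?_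
  exact Complex.ofReal_re _

end PurityAux

open Matrix PurityAux in
/-- A positive trace-preserving linear map `Φ` is unital iff it does not
increase the purity `trace(ρ²)` of density matrices. -/
theorem unital_iff_purity_nonincreasing {n : ℕ} (hn : 1 ≤ n)
    (Φ : Matrix (Fin n) (Fin n) ℂ →ₗ[ℂ] Matrix (Fin n) (Fin n) ℂ)
    (hpos : IsPositiveMap Φ) (htp : IsTracePreserving Φ) :
    Φ 1 = 1 ↔
      ∀ ρ : Matrix (Fin n) (Fin n) ℂ, IsDensityMatrix ρ →
        (Matrix.trace (Φ ρ * Φ ρ)).re ≤ (Matrix.trace (ρ * ρ)).re := by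
  constructor
  · -- unital ⇒ purity nonincreasing
    intro hone ρ hρ
    obtain ⟨hpsd, htr⟩ := hρ
    have hH : ρ.IsHermitian := hpsd.1
    set U : Matrix (Fin n) (Fin n) ℂ := (hH.eigenvectorUnitary : Matrix (Fin n) (Fin n) ℂ)
      with hUdef
    have hU : star U * U = 1 := mem_unitaryGroup_iff'.mp hH.eigenvectorUnitary.2
    set lam : Fin n → ℝ := hH.eigenvalues with hlam
    set E : Fin n → Matrix (Fin n) (Fin n) ℂ :=
      fun i => U * diagonal (Pi.single i 1) * star U with hEdef
    have hEpsd : ∀ i, (E i).PosSemidef := by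
      intro i
      have hd : (0 : Fin n → ℂ) ≤ Pi.single i 1 := by
        intro j
        by_cases h : j = i <;> simp [Pi.single_apply, h]
      have := (Matrix.PosSemidef.diagonal hd).mul_mul_conjTranspose_same U
      exact this
    have hsumE : ∑ i, E i = 1 := by
      have hdone : ∑ i, (diagonal (Pi.single i 1) : Matrix (Fin n) (Fin n) ℂ) = 1 := by
        ext a b
        simp only [Matrix.sum_apply, diagonal_apply, Matrix.one_apply]
        by_cases h : a = b
        · subst h
          simp [Pi.single_apply]
        · simp [h]
      calc ∑ i, E i = U * (∑ i, diagonal (Pi.single i 1)) * star U := by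
            rw [Finset.mul_sum, Finset.sum_mul]
        _ = 1 := by
            rw [hdone, Matrix.mul_one, mem_unitaryGroup_iff.mp hH.eigenvectorUnitary.2]
    have hρsum : ρ = ∑ i, (lam i : ℂ) • E i := spectral_sum hH
    set Q : Fin n → Matrix (Fin n) (Fin n) ℂ := fun i => Φ (E i) with hQdef
    have hQpsd : ∀ i, (Q i).PosSemidef := fun i => hpos _ (hEpsd i)
    have hsumQ : ∑ i, Q i = 1 := by
      calc ∑ i, Q i = Φ (∑ i, E i) := (map_sum Φ E Finset.univ).symm
        _ = 1 := by rw [hsumE, hone]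
    have hΦρ : Φ ρ = ∑ i, (lam i : ℂ) • Q i := by
      conv_lhs => rw [hρsum]
      rw [map_sum]
      refine Finset.sum_congr rfl fun i _ => ?_
      rw [Φ.map_smul]
    -- the nonnegative symmetric coefficients
    set r : Fin n → Fin n → ℝ := fun i j => (Matrix.trace (Q i * Q j)).re with hrdef
    have hrnn : ∀ i j, 0 ≤ r i j := by
      intro i j
      exact (Complex.le_def.mp (psd_trace_mul_nonneg (hQpsd i) (hQpsd j))).1
    have hrc : ∀ i j, Matrix.trace (Q i * Q j) = (r i j : ℂ) := by
      intro i j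
      have h := Complex.le_def.mp (psd_trace_mul_nonneg (hQpsd i) (hQpsd j))
      apply Complex.ext
      · rfl
      · simpa using h.2.symm
    have hrsymm : ∀ i j, r i j = r j i := by
      intro i j
      simp only [hrdef]
      rw [trace_mul_comm]
    have htrQ : ∀ i, Matrix.trace (Q i) = 1 := by
      intro i
      rw [show Q i = Φ (E i) from rfl, htp (E i),
        show E i = U * diagonal (Pi.single i 1) * star U from rfl,
        trace_conj_unitary hU, trace_diagonal]
      simp
    have hrow : ∀ i, ∑ j, r i j = 1 := by
      intro i
      have hs : ∑ j, Matrix.trace (Q i * Q j) = Matrix.trace (Q i) := by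
        rw [← trace_sum, ← Finset.mul_sum, hsumQ, Matrix.mul_one]
      have : ((1 : ℂ)).re = (1:ℝ) := by simp
      calc ∑ j, r i j = (∑ j, Matrix.trace (Q i * Q j)).re := (Complex.re_sum _ _).symm
        _ = (Matrix.trace (Q i)).re := by rw [hs]
        _ = 1 := by rw [htrQ i]; simp
    -- trace (Φρ * Φρ) = ∑ i j, lam i * lam j * r i j
    have expand : (∑ i, (lam i : ℂ) • Q i) * (∑ j, (lam j : ℂ) • Q j)
        = ∑ i, ∑ j, ((lam i : ℂ) * (lam j : ℂ)) • (Q i * Q j) := by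
      rw [Finset.sum_mul]
      refine Finset.sum_congr rfl fun i _ => ?_
      rw [Finset.mul_sum]
      refine Finset.sum_congr rfl fun j _ => ?_
      rw [smul_mul_assoc, Matrix.mul_smul, smul_smul]
    have key : (Matrix.trace (Φ ρ * Φ ρ)).re = ∑ i, ∑ j, lam i * lam j * r i j := by
      rw [hΦρ, expand, trace_sum, Complex.re_sum]
      refine Finset.sum_congr rfl fun i _ => ?_
      rw [trace_sum, Complex.re_sum]
      refine Finset.sum_congr rfl fun j _ => ?_
      rw [trace_smul, hrc, smul_eq_mul, ← Complex.ofReal_mul, ← Complex.ofReal_mul,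
        Complex.ofReal_re]
    -- trace (ρ * ρ) = ∑ lam²
    have key2 : (Matrix.trace (ρ * ρ)).re = ∑ i, (lam i)^2 := trace_sq_re hH
    rw [key, key2]
    -- final scalar inequality
    have step : ∀ i j, lam i * lam j * r i j ≤ (lam i ^ 2 + lam j ^ 2) / 2 * r i j := by
      intro i j
      apply mul_le_mul_of_nonneg_right _ (hrnn i j)
      nlinarith [sq_nonneg (lam i - lam j)]
    calc ∑ i, ∑ j, lam i * lam j * r i j
        ≤ ∑ i, ∑ j, (lam i ^ 2 + lam j ^ 2) / 2 * r i j := by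
          refine Finset.sum_le_sum fun i _ => ?_
          exact Finset.sum_le_sum fun j _ => step i j
      _ = (∑ i, ∑ j, lam i ^ 2 * r i j + ∑ i, ∑ j, lam j ^ 2 * r i j) / 2 := by
          rw [← Finset.sum_add_distrib, Finset.sum_div]
          refine Finset.sum_congr rfl fun i _ => ?_
          rw [← Finset.sum_add_distrib, Finset.sum_div]
          refine Finset.sum_congr rfl fun j _ => ?_
          ring
      _ = (∑ i, ∑ j, lam i ^ 2 * r i j + ∑ i, ∑ j, lam i ^ 2 * r i j) / 2 := by
          congr 2
          rw [Finset.sum_comm]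
          refine Finset.sum_congr rfl fun i _ => ?_
          refine Finset.sum_congr rfl fun j _ => ?_
          rw [hrsymm i j]
      _ = ∑ i, ∑ j, lam i ^ 2 * r i j := by ring
      _ = ∑ i, lam i ^ 2 := by
          refine Finset.sum_congr rfl fun i _ => ?_
          rw [← Finset.mul_sum, hrow, mul_one]
  · -- purity nonincreasing ⇒ unital
    intro h
    have hnR : (0:ℝ) < n := by exact_mod_cast hn
    have hn0 : (n : ℂ) ≠ 0 := by
      exact_mod_cast hnR.ne'
    have hρd : IsDensityMatrix (((n : ℂ))⁻¹ • (1 : Matrix (Fin n) (Fin n) ℂ)) := by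
      constructor
      · have hdiag : ((n : ℂ))⁻¹ • (1 : Matrix (Fin n) (Fin n) ℂ)
            = diagonal (fun _ => ((n:ℂ))⁻¹) := by
          ext a b
          by_cases hab : a = b
          · subst hab
            simp [Matrix.one_apply, diagonal_apply]
          · simp [Matrix.one_apply, hab, diagonal_apply]
        rw [hdiag]
        apply Matrix.PosSemidef.diagonal
        intro i
        rw [show ((n:ℂ))⁻¹ = (((n:ℝ)⁻¹ : ℝ) : ℂ) from by push_cast; ring]
        exact Complex.zero_le_real.mpr (by positivity)
      · rw [trace_smul, trace_one, smul_eq_mul, Fintype.card_fin]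
        field_simp
    have hineq := h _ hρd
    have hApsd : (Φ 1).PosSemidef := hpos 1 Matrix.PosSemidef.one
    have hAH : (Φ 1).IsHermitian := hApsd.1
    have htrA : Matrix.trace (Φ 1) = (n : ℂ) := by
      rw [htp 1, trace_one]
      simp
    have hΦρ : Φ (((n : ℂ))⁻¹ • (1 : Matrix (Fin n) (Fin n) ℂ)) = ((n:ℂ))⁻¹ • Φ 1 :=
      map_smul Φ _ _
    have hsq : (Matrix.trace (Φ (((n : ℂ))⁻¹ • (1 : Matrix (Fin n) (Fin n) ℂ)) *
          Φ (((n : ℂ))⁻¹ • (1 : Matrix (Fin n) (Fin n) ℂ)))).re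
        = ((n:ℝ))⁻¹^2 * (Matrix.trace (Φ 1 * Φ 1)).re := by
      rw [hΦρ, smul_mul_assoc, Matrix.mul_smul, smul_smul, trace_smul]
      rw [show ((n:ℂ))⁻¹ * ((n:ℂ))⁻¹ = (((n:ℝ)⁻¹^2 : ℝ) : ℂ) from by push_cast; ring]
      rw [smul_eq_mul, Complex.re_ofReal_mul]
    have hrhs : (Matrix.trace ((((n : ℂ))⁻¹ • (1 : Matrix (Fin n) (Fin n) ℂ)) *
          (((n : ℂ))⁻¹ • (1 : Matrix (Fin n) (Fin n) ℂ)))).re = ((n:ℝ))⁻¹ := by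
      rw [smul_mul_assoc, Matrix.mul_smul, smul_smul, Matrix.one_mul, trace_smul,
        trace_one, smul_eq_mul, Fintype.card_fin]
      rw [show ((n:ℂ))⁻¹ * ((n:ℂ))⁻¹ * (n:ℂ) = (((n:ℝ)⁻¹ : ℝ) : ℂ) from by
        push_cast; field_simp]
      exact Complex.ofReal_re _
    have hAA : (Matrix.trace (Φ 1 * Φ 1)).re ≤ n := by
      rw [hsq, hrhs] at hineq
      have hinv : (0:ℝ) < (n:ℝ)⁻¹ := by positivity
      calc (Matrix.trace (Φ 1 * Φ 1)).re
          = ((n:ℝ)^2) * (((n:ℝ))⁻¹^2 * (Matrix.trace (Φ 1 * Φ 1)).re) := by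
            field_simp
        _ ≤ ((n:ℝ)^2) * ((n:ℝ))⁻¹ := by
            apply mul_le_mul_of_nonneg_left hineq (by positivity)
        _ = n := by field_simp
    have hsum : ∑ i, hAH.eigenvalues i = n := by
      rw [← trace_re hAH, htrA]
      simp
    have hsumsq : ∑ i, (hAH.eigenvalues i)^2 ≤ n := by
      rw [← trace_sq_re hAH]
      exact hAA
    have hmu1 : ∀ i, hAH.eigenvalues i = 1 := by
      have hzero : ∑ i, (hAH.eigenvalues i - 1)^2 ≤ 0 := by
        have expand : ∑ i, (hAH.eigenvalues i - 1)^2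
            = ∑ i, (hAH.eigenvalues i)^2 - 2 * ∑ i, hAH.eigenvalues i + n := by
          have : ∀ i : Fin n, (hAH.eigenvalues i - 1)^2
              = (hAH.eigenvalues i)^2 - 2 * hAH.eigenvalues i + 1 := fun i => by ring
          rw [Finset.sum_congr rfl fun i _ => this i, Finset.sum_add_distrib,
            Finset.sum_sub_distrib, ← Finset.mul_sum]
          simp [Finset.card_univ]
        rw [expand, hsum]
        linarith
      intro i
      have h1 : (hAH.eigenvalues i - 1)^2 ≤ ∑ j, (hAH.eigenvalues j - 1)^2 :=
        Finset.single_le_sum (fun j _ => sq_nonneg (hAH.eigenvalues j - 1))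
          (Finset.mem_univ i)
      nlinarith [sq_nonneg (hAH.eigenvalues i - 1)]
    have hd : (diagonal (RCLike.ofReal ∘ hAH.eigenvalues) : Matrix (Fin n) (Fin n) ℂ) = 1 := by
      have hfun : (RCLike.ofReal ∘ hAH.eigenvalues : Fin n → ℂ) = fun _ => 1 := by
        funext i
        simp [hmu1 i]
      rw [hfun]
      simp [Matrix.diagonal_one]
    calc Φ 1 = (hAH.eigenvectorUnitary : Matrix (Fin n) (Fin n) ℂ) *
          diagonal (RCLike.ofReal ∘ hAH.eigenvalues) *
          star (hAH.eigenvectorUnitary : Matrix (Fin n) (Fin n) ℂ) := hAH.spectral_theorem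
      _ = 1 := by
          rw [hd, Matrix.mul_one, mem_unitaryGroup_iff.mp hAH.eigenvectorUnitary.2]
end
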